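/- arXiv:1912.11741 — 5 statements merged into one kernel-verified Lean document; each statement's English description precedes it below -/
import Mathlib

section
/- For every integer d ≥ 1, every σ > 0, and every 0 < ε ≤ 1, set y := ln(4/ε) and let w > 0 be the unique positive real with w·e^{w} = y/(e·σ²). Then ln N(ε, U_σ(B_2^d)) ≤ binom(2y/w + d, d) · y. -/
open Real Filter MeasureTheory

/-- Generalized binomial coefficient `binom(t+d, d) = (1/d!) ∏_{i=1}^d (t+i)`. -/
noncomputable def gbinom (t : ℝ) (d : ℕ) : ℝ :=
  (∏ i ∈ Finset.range d, (t + (i : ℝ) + 1)) / (Nat.factorial d : ℝ)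

/-- Covering number of a set of real-valued functions w.r.t. the sup distance,
by bounded functions. -/
noncomputable def covN {α : Type*} (ε : ℝ) (A : Set (α → ℝ)) : ℕ :=
  sInf {n : ℕ | ∃ g : Fin n → (α → ℝ),
    (∀ i, ∃ C : ℝ, ∀ y, |g i y| ≤ C) ∧
    ∀ f ∈ A, ∃ i, ∀ y, |f y - g i y| ≤ ε}

/-- The functions `e_k^σ` forming an ONB of the Gaussian RKHS. -/
noncomputable def ek (d : ℕ) (σ : ℝ) (k : Fin d → ℕ) (x : EuclideanSpace ℝ (Fin d)) : ℝ :=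
  Real.sqrt ((2 * σ ^ 2) ^ (∑ i, k i) / ∏ i, (Nat.factorial (k i) : ℝ)) *
    (∏ i, x i ^ k i) * Real.exp (-σ ^ 2 * ‖x‖ ^ 2)

/-- The image `U_σ(Y)` of the closed unit ball of the Gaussian RKHS on `Y`. -/
noncomputable def UBall (d : ℕ) (σ : ℝ) (Y : Set (EuclideanSpace ℝ (Fin d))) :
    Set (Y → ℝ) :=
  {f | ∃ a : (Fin d → ℕ) → ℝ,
    Summable (fun k => a k ^ 2) ∧ (∑' k, a k ^ 2) ≤ 1 ∧
    (∀ x : Y, Summable (fun k => |a k * ek d σ k ↑x|)) ∧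
    (∀ x : Y, f x = ∑' k, a k * ek d σ k ↑x)}

/-- The closed Euclidean unit ball of `ℝ^d`. -/
def B2 (d : ℕ) : Set (EuclideanSpace ℝ (Fin d)) := Metric.closedBall 0 1


open Real Filter MeasureTheory Finset

open Finset Metric
open scoped ENNReal NNReal

lemma sqrt_le_one' {z : ℝ} (hz : z ≤ 1) : Real.sqrt z ≤ 1 := by
  rw [show (1:ℝ) = Real.sqrt 1 by rw [Real.sqrt_one]]
  exact Real.sqrt_le_sqrt (by linarith)

lemma hockey (d m : ℕ) : ∑ i ∈ Finset.range (m+1), (i+d).choose d = (m+d+1).choose (d+1) := by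
  induction m with
  | zero => simp
  | succ m ih =>
    rw [Finset.sum_range_succ, ih]
    have h2 : m + 1 + d + 1 = m + d + 1 + 1 := by omega
    have h3 : m + 1 + d = m + d + 1 := by omega
    rw [h2, h3, Nat.choose_succ_succ (m + d + 1) d]
    simp only [Nat.succ_eq_add_one]
    omega

noncomputable def Kfin (d m : ℕ) : Finset (Fin d → ℕ) :=
  (Finset.range (m+1)).biUnion (fun j => Finset.Nat.antidiagonalTuple d j)

lemma mem_Kfin {d m : ℕ} {k : Fin d → ℕ} : k ∈ Kfin d m ↔ ∑ i, k i ≤ m := by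
  simp [Kfin, Finset.Nat.mem_antidiagonalTuple, Nat.lt_succ_iff]

lemma card_Kfin (d m : ℕ) : (Kfin d m).card = (m + d).choose d := by
  induction d generalizing m with
  | zero =>
    have : Kfin 0 m = {![]} := by
      ext k
      simp only [mem_Kfin, Finset.mem_singleton]
      constructor
      · intro _; ext i; exact absurd i.2 (Nat.not_lt_zero _)
      · intro h; simp [h]
    rw [this]; simp
  | succ d ih =>
    have hrepr : Kfin (d+1) m
        = (Finset.range (m+1)).biUnion
            (fun j => (Kfin d (m - j)).image (fun k' => (Fin.cons j k' : Fin (d+1) → ℕ))) := by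
      ext k
      simp only [mem_Kfin, Finset.mem_biUnion, Finset.mem_range, Finset.mem_image,
        Nat.lt_succ_iff]
      constructor
      · intro h
        have hs : ∑ i, k i = k 0 + ∑ i : Fin d, Fin.tail k i := Fin.sum_univ_succ k
        exact ⟨k 0, by omega, Fin.tail k, by omega, Fin.cons_self_tail k⟩
      · rintro ⟨j, hj, k', hk', rfl⟩
        have hs : ∑ i, (Fin.cons j k' : Fin (d+1) → ℕ) i = j + ∑ i : Fin d, k' i := by
          rw [Fin.sum_univ_succ]; simp
        omega
    rw [hrepr, Finset.card_biUnion]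
    · have : ∀ j ∈ Finset.range (m+1),
          ((Kfin d (m - j)).image (fun k' => (Fin.cons j k' : Fin (d+1) → ℕ))).card
            = (m - j + d).choose d := by
        intro j _
        rw [Finset.card_image_of_injective _ (fun a b hab => ?_), ih]
        have := congrArg Fin.tail hab
        simpa using this
      rw [Finset.sum_congr rfl this,
        ← Finset.sum_range_reflect (fun j => (m - j + d).choose d) (m+1)]
      have h4 : ∀ j ∈ Finset.range (m+1), (m - (m + 1 - 1 - j) + d).choose d
          = (j + d).choose d := by
        intro j hj
        rw [Finset.mem_range, Nat.lt_succ_iff] at hj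
        congr 2
        omega
      rw [Finset.sum_congr rfl h4, hockey, Nat.add_assoc]
    · intro a ha b hb hab
      simp only [Finset.disjoint_left, Finset.mem_image]
      rintro k ⟨k', _, rfl⟩ ⟨k'', _, h⟩
      have := congrArg (fun f => f 0) h
      simp only [Fin.cons_zero] at this
      exact hab this.symm

lemma pow_le_factorial_mul_exp (n : ℕ) : (n : ℝ)^n ≤ (n.factorial : ℝ) * Real.exp 1 ^ n := by
  induction n with
  | zero => simp
  | succ n ih =>
    rcases Nat.eq_zero_or_pos n with rfl | hn
    · simpa using Real.one_le_exp (by norm_num)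
    have hn' : (0:ℝ) < n := by exact_mod_cast hn
    have key : ((n:ℝ)+1)^n ≤ (n.factorial : ℝ) * Real.exp 1 ^ (n+1) := by
      have h1 : ((n:ℝ)+1)^n = (n:ℝ)^n * (1 + 1/n)^n := by
        rw [← mul_pow]; congr 1; field_simp
      have h2 : (1 + 1/(n:ℝ))^n ≤ Real.exp 1 := by
        have := Real.add_one_le_exp (1/(n:ℝ))
        calc (1 + 1/(n:ℝ))^n ≤ (Real.exp (1/n))^n := by
              apply pow_le_pow_left₀ (by positivity)
              linarith
          _ = Real.exp 1 := by
              rw [← Real.exp_nat_mul]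
              congr 1; field_simp
      calc ((n:ℝ)+1)^n = (n:ℝ)^n * (1 + 1/n)^n := h1
        _ ≤ ((n.factorial : ℝ) * Real.exp 1 ^ n) * Real.exp 1 := by
            apply mul_le_mul ih h2 (by positivity) (by positivity)
        _ = (n.factorial : ℝ) * Real.exp 1 ^ (n+1) := by ring
    rw [Nat.factorial_succ]
    push_cast
    calc ((n:ℝ)+1)^(n+1) = ((n:ℝ)+1) * ((n:ℝ)+1)^n := by ring
      _ ≤ ((n:ℝ)+1) * ((n.factorial : ℝ) * Real.exp 1 ^ (n+1)) :=
          mul_le_mul_of_nonneg_left key (by positivity)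
      _ = ((n:ℝ)+1) * (n.factorial : ℝ) * Real.exp 1 ^ (n+1) := by ring

lemma net_exists {ι : Type} [Fintype ι] [Nonempty ι] {δ : ℝ} (hδ : 0 < δ) :
    ∃ P : Finset (EuclideanSpace ℝ ι),
      (P.card : ℝ) ≤ (1 + 2/δ) ^ (Fintype.card ι) ∧
      ∀ x ∈ Metric.closedBall (0 : EuclideanSpace ℝ ι) 1, ∃ p ∈ P, dist x p ≤ δ := by
  classical
  set E := EuclideanSpace ℝ ι
  set n := Fintype.card ι with hn
  have hnontriv : Nontrivial E := by
    infer_instance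
  have hfinrank : Module.finrank ℝ E = n := finrank_euclideanSpace
  set μ : Measure E := volume with hμ
  have hB0 : μ (ball (0:E) 1) ≠ 0 := (measure_ball_pos μ 0 one_pos).ne'
  have hBtop : μ (ball (0:E) 1) ≠ ⊤ := measure_ball_lt_top.ne
  -- the "good" predicate: δ-separated subsets of the unit ball
  set good : Finset E → Prop :=
    fun S => (↑S ⊆ Metric.closedBall (0:E) 1) ∧
      (∀ s ∈ S, ∀ t ∈ S, s ≠ t → δ ≤ dist s t) with hgood
  have cardb : ∀ S : Finset E, good S → (S.card : ℝ) ≤ (1 + 2/δ)^n := by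
    intro S hS
    have hdisj : (↑S : Set E).PairwiseDisjoint (fun s => Metric.ball s (δ/2)) := by
      intro s hs t ht hst
      exact Metric.ball_disjoint_ball (by linarith [hS.2 s hs t ht hst])
    have hmeas : μ (⋃ s ∈ S, Metric.ball s (δ/2)) = ∑ s ∈ S, μ (Metric.ball s (δ/2)) :=
      measure_biUnion_finset hdisj (fun s _ => measurableSet_ball)
    have hballeq : ∀ s : E, μ (Metric.ball s (δ/2))
        = ENNReal.ofReal ((δ/2)^n) * μ (ball (0:E) 1) := by
      intro s
      rw [Measure.addHaar_ball μ s (by linarith : (0:ℝ) ≤ δ/2), hfinrank,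
        ENNReal.ofReal_pow (by linarith)]
    have hsub : (⋃ s ∈ S, Metric.ball s (δ/2)) ⊆ Metric.ball (0:E) (1 + δ/2) := by
      intro z hz
      simp only [Set.mem_iUnion] at hz
      obtain ⟨s, hs, hzs⟩ := hz
      have h1 : dist s 0 ≤ 1 := Metric.mem_closedBall.mp (hS.1 hs)
      have h2 : dist z s < δ/2 := Metric.mem_ball.mp hzs
      exact Metric.mem_ball.mpr (by calc dist z 0 ≤ dist z s + dist s 0 := dist_triangle _ _ _
        _ < 1 + δ/2 := by linarith)
    have hbig : μ (Metric.ball (0:E) (1 + δ/2))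
        = ENNReal.ofReal ((1 + δ/2)^n) * μ (ball (0:E) 1) := by
      rw [Measure.addHaar_ball μ 0 (by linarith : (0:ℝ) ≤ 1 + δ/2), hfinrank,
        ENNReal.ofReal_pow (by linarith)]
    have hchain : (S.card : ℝ≥0∞) * (ENNReal.ofReal ((δ/2)^n) * μ (ball (0:E) 1))
        ≤ ENNReal.ofReal ((1 + δ/2)^n) * μ (ball (0:E) 1) := by
      calc (S.card : ℝ≥0∞) * (ENNReal.ofReal ((δ/2)^n) * μ (ball (0:E) 1))
          = ∑ s ∈ S, μ (Metric.ball s (δ/2)) := by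
            rw [Finset.sum_congr rfl (fun s _ => hballeq s), Finset.sum_const, nsmul_eq_mul]
        _ = μ (⋃ s ∈ S, Metric.ball s (δ/2)) := hmeas.symm
        _ ≤ μ (Metric.ball (0:E) (1 + δ/2)) := measure_mono hsub
        _ = _ := hbig
    rw [← mul_assoc] at hchain
    have hcan := (ENNReal.mul_le_mul_iff_left hB0 hBtop).mp hchain
    -- (S.card) * ofReal ((δ/2)^n) ≤ ofReal ((1+δ/2)^n)
    have hd2 : (0:ℝ) < (δ/2)^n := by positivity
    have : (S.card : ℝ) * (δ/2)^n ≤ (1 + δ/2)^n := by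
      have := ENNReal.toReal_mono (by simp) hcan
      rw [ENNReal.toReal_mul, ENNReal.toReal_ofReal hd2.le] at this
      simpa [ENNReal.toReal_ofReal (by positivity : (0:ℝ) ≤ (1+δ/2)^n)] using this
    have hfinal : (S.card : ℝ) ≤ (1 + δ/2)^n / (δ/2)^n := by
      rw [le_div_iff₀ hd2]; exact this
    calc (S.card : ℝ) ≤ (1 + δ/2)^n / (δ/2)^n := hfinal
      _ = ((1 + δ/2)/(δ/2))^n := (div_pow _ _ _).symm
      _ = (1 + 2/δ)^n := by congr 1; field_simp; ring
  -- maximal separated set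
  set C : Set ℕ := {c : ℕ | ∃ S : Finset E, good S ∧ S.card = c} with hC
  have hCne : C.Nonempty := ⟨0, ∅, ⟨by simp, by simp⟩, rfl⟩
  have hCbdd : BddAbove C := by
    refine ⟨⌈(1 + 2/δ)^n⌉₊, ?_⟩
    rintro c ⟨S, hS, rfl⟩
    exact_mod_cast (cardb S hS).trans (Nat.le_ceil _)
  obtain ⟨S, hSgood, hScard⟩ : ∃ S : Finset E, good S ∧ S.card = sSup C := Nat.sSup_mem hCne hCbdd
  refine ⟨S, hScard ▸ cardb S hSgood, ?_⟩
  intro x hx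
  by_contra hcon
  push_neg at hcon
  have hxS : x ∉ S := fun hxm => by
    have := hcon x hxm
    rw [dist_self] at this
    linarith
  have hgood' : good (insert x S) := by
    constructor
    · intro z hz
      rcases Finset.mem_insert.mp (by exact_mod_cast hz) with rfl | hzS
      · exact hx
      · exact hSgood.1 hzS
    · intro s hs t ht hst
      rcases Finset.mem_insert.mp hs with rfl | hs' <;>
        rcases Finset.mem_insert.mp ht with rfl | ht'
      · exact absurd rfl hst
      · exact (hcon t ht').le
      · rw [dist_comm]; exact (hcon s hs').le
      · exact hSgood.2 s hs' t ht' hst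
  have : (insert x S).card ∈ C := ⟨_, hgood', rfl⟩
  have hle := le_csSup hCbdd this
  rw [Finset.card_insert_of_notMem hxS, hScard] at hle
  omega

noncomputable def cP (d : ℕ) (σ : ℝ) (k : Fin d → ℕ) (x : EuclideanSpace ℝ (Fin d)) : ℝ :=
  ((2 * σ ^ 2) ^ (∑ i, k i) / ∏ i, (Nat.factorial (k i) : ℝ)) * ∏ i, x i ^ (2 * k i)

section EkLemmas

variable {d : ℕ} {σ : ℝ} (hσ : 0 < σ) (x : EuclideanSpace ℝ (Fin d))

lemma prod_fact_pos (k : Fin d → ℕ) : (0:ℝ) < ∏ i, (Nat.factorial (k i) : ℝ) := by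
  apply Finset.prod_pos
  intro i _
  exact_mod_cast Nat.factorial_pos _

lemma cP_nonneg (k : Fin d → ℕ) : 0 ≤ cP d σ k x := by
  apply mul_nonneg
  · apply div_nonneg (by positivity) (prod_fact_pos k).le
  · apply Finset.prod_nonneg
    intro i _
    rw [mul_comm, pow_mul]
    positivity

lemma ek_sq_eq (k : Fin d → ℕ) :
    (ek d σ k x)^2 = cP d σ k x * Real.exp (-(2 * σ^2 * ‖x‖^2)) := by
  unfold ek cP
  rw [mul_pow, mul_pow, Real.sq_sqrt (by positivity), ← Finset.prod_pow]
  have h1 : ∀ i ∈ (Finset.univ : Finset (Fin d)), (x i ^ k i)^2 = x i ^ (2 * k i) := by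
    intro i _; rw [← pow_mul, mul_comm]
  rw [Finset.prod_congr rfl h1,
    show (Real.exp (-σ^2*‖x‖^2))^2 = Real.exp (-(2*σ^2*‖x‖^2)) by
      rw [sq, ← Real.exp_add]; ring_nf]

lemma norm_sq_eq : ‖x‖^2 = ∑ i, (x i)^2 := by
  rw [EuclideanSpace.norm_eq, Real.sq_sqrt]
  · congr 1; ext i; rw [Real.norm_eq_abs, sq_abs]
  · positivity

lemma level_sum (j : ℕ) :
    ∑ k ∈ Finset.Nat.antidiagonalTuple d j, cP d σ k x
      = (2 * σ^2 * ‖x‖^2)^j / (Nat.factorial j : ℝ) := by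
  classical
  have hset : Finset.Nat.antidiagonalTuple d j
      = Finset.piAntidiag (Finset.univ : Finset (Fin d)) j := by
    ext k
    simp [Finset.Nat.mem_antidiagonalTuple, Finset.mem_piAntidiag]
  have hmulti := Finset.sum_pow_eq_sum_piAntidiag (Finset.univ : Finset (Fin d))
    (fun i => 2 * σ^2 * (x i)^2) j
  have hnorm : (2 * σ^2 * ‖x‖^2) = ∑ i, 2 * σ^2 * (x i)^2 := by
    rw [norm_sq_eq, Finset.mul_sum]
  rw [hset, hnorm, hmulti]
  rw [Finset.sum_div]
  apply Finset.sum_congr rfl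
  intro k hk
  rw [Finset.mem_piAntidiag] at hk
  have hsum : ∑ i, k i = j := hk.1
  have hspec := Nat.multinomial_spec (Finset.univ : Finset (Fin d)) k
  -- (∏ i, (k i)!) * multinomial = (∑ k)!
  unfold cP
  have hprodsplit : ∏ i, (2 * σ^2 * (x i)^2) ^ k i
      = (2*σ^2)^(∑ i, k i) * ∏ i, (x i)^(2 * k i) := by
    rw [← Finset.prod_pow_eq_pow_sum, ← Finset.prod_mul_distrib]
    apply Finset.prod_congr rfl
    intro i _
    rw [mul_pow, pow_mul]
  rw [hprodsplit, hsum]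
  have hmn : (Nat.multinomial (Finset.univ : Finset (Fin d)) k : ℝ)
      = (Nat.factorial j : ℝ) / ∏ i, (Nat.factorial (k i) : ℝ) := by
    rw [eq_div_iff (prod_fact_pos k).ne']
    rw [mul_comm]
    rw [← Nat.cast_prod, ← Nat.cast_mul]
    rw [hsum] at hspec
    exact_mod_cast hspec
  rw [hmn]
  have hfj : (0:ℝ) < (Nat.factorial j : ℝ) := by exact_mod_cast Nat.factorial_pos j
  field_simp

/-- finite sums of `cP` over sets of multi-indices with level at least `M` -/
lemma cP_finsum_le (M : ℕ) (S : Finset (Fin d → ℕ)) (hS : ∀ k ∈ S, M ≤ ∑ i, k i) :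
    ∑ k ∈ S, cP d σ k x
      ≤ (2*σ^2*‖x‖^2)^M / (Nat.factorial M : ℝ) * Real.exp (2*σ^2*‖x‖^2) := by
  classical
  set t := 2*σ^2*‖x‖^2 with ht
  have ht0 : 0 ≤ t := by positivity
  set J := S.sup (fun k => ∑ i, k i) with hJ
  have hsub : S ⊆ (Finset.Icc M J).biUnion (fun j => Finset.Nat.antidiagonalTuple d j) := by
    intro k hk
    rw [Finset.mem_biUnion]
    exact ⟨∑ i, k i, Finset.mem_Icc.mpr ⟨hS k hk, Finset.le_sup hk⟩,
      Finset.Nat.mem_antidiagonalTuple.mpr rfl⟩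
  have hstep1 : ∑ k ∈ S, cP d σ k x
      ≤ ∑ k ∈ (Finset.Icc M J).biUnion (fun j => Finset.Nat.antidiagonalTuple d j), cP d σ k x :=
    Finset.sum_le_sum_of_subset_of_nonneg hsub (fun k _ _ => cP_nonneg x k)
  have hdisj : ∀ j₁ ∈ Finset.Icc M J, ∀ j₂ ∈ Finset.Icc M J, j₁ ≠ j₂ →
      Disjoint (Finset.Nat.antidiagonalTuple d j₁) (Finset.Nat.antidiagonalTuple d j₂) := by
    intro a _ b _ hab
    simp only [Finset.disjoint_left]
    intro k hk1 hk2
    rw [Finset.Nat.mem_antidiagonalTuple] at hk1 hk2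
    exact hab (hk1 ▸ hk2)
  rw [Finset.sum_biUnion hdisj] at hstep1
  have hlevels : ∀ j, ∑ k ∈ Finset.Nat.antidiagonalTuple d j, cP d σ k x
      = t^j / (Nat.factorial j : ℝ) := fun j => level_sum x j
  rw [Finset.sum_congr rfl (fun j _ => hlevels j)] at hstep1
  refine hstep1.trans ?_
  -- ∑_{j ∈ Icc M J} t^j/j! ≤ t^M/M! * exp t
  have hIcc : Finset.Icc M J = Finset.Ico M (J+1) := by
    rw [Finset.Ico_add_one_right_eq_Icc]
  rw [hIcc, Finset.sum_Ico_eq_sum_range]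
  have hterm : ∀ i : ℕ, t^(M+i) / (Nat.factorial (M+i) : ℝ)
      ≤ t^M / (Nat.factorial M : ℝ) * (t^i / (Nat.factorial i : ℝ)) := by
    intro i
    have hfle : (Nat.factorial M : ℝ) * (Nat.factorial i : ℝ) ≤ (Nat.factorial (M+i) : ℝ) := by
      exact_mod_cast Nat.le_of_dvd (Nat.factorial_pos _)
        (Nat.factorial_mul_factorial_dvd_factorial_add M i)
    calc t^(M+i) / (Nat.factorial (M+i) : ℝ)
        ≤ t^(M+i) / ((Nat.factorial M : ℝ) * (Nat.factorial i : ℝ)) :=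
          div_le_div_of_nonneg_left (by positivity) (by positivity) hfle
      _ = t^M / (Nat.factorial M : ℝ) * (t^i / (Nat.factorial i : ℝ)) := by
          rw [div_mul_div_comm, pow_add]
  calc ∑ i ∈ Finset.range (J + 1 - M), t^(M+i) / (Nat.factorial (M+i) : ℝ)
      ≤ ∑ i ∈ Finset.range (J + 1 - M),
          t^M / (Nat.factorial M : ℝ) * (t^i / (Nat.factorial i : ℝ)) :=
        Finset.sum_le_sum (fun i _ => hterm i)
    _ = t^M / (Nat.factorial M : ℝ) * ∑ i ∈ Finset.range (J + 1 - M),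
          t^i / (Nat.factorial i : ℝ) := by rw [Finset.mul_sum]
    _ ≤ t^M / (Nat.factorial M : ℝ) * Real.exp t := by
        apply mul_le_mul_of_nonneg_left (Real.sum_le_exp_of_nonneg ht0 _) (by positivity)

lemma summable_cP : Summable (fun k : Fin d → ℕ => cP d σ k x) := by
  apply summable_of_sum_le (fun k => cP_nonneg x k)
  intro S
  have := cP_finsum_le (σ := σ) x 0 S (fun k _ => Nat.zero_le _)
  simpa using this

lemma sum_ek_sq_le_one (S : Finset (Fin d → ℕ)) : ∑ k ∈ S, (ek d σ k x)^2 ≤ 1 := by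
  have h1 : ∑ k ∈ S, (ek d σ k x)^2
      = (∑ k ∈ S, cP d σ k x) * Real.exp (-(2 * σ^2 * ‖x‖^2)) := by
    rw [Finset.sum_mul]
    exact Finset.sum_congr rfl (fun k _ => ek_sq_eq x k)
  rw [h1]
  have h2 : ∑ k ∈ S, cP d σ k x ≤ Real.exp (2*σ^2*‖x‖^2) := by
    have := cP_finsum_le (σ := σ) x 0 S (fun k _ => Nat.zero_le _)
    simpa using this
  calc (∑ k ∈ S, cP d σ k x) * Real.exp (-(2 * σ^2 * ‖x‖^2))
      ≤ Real.exp (2*σ^2*‖x‖^2) * Real.exp (-(2 * σ^2 * ‖x‖^2)) :=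
        mul_le_mul_of_nonneg_right h2 (Real.exp_nonneg _)
    _ = 1 := by rw [← Real.exp_add]; simp

lemma summable_ek_sq : Summable (fun k : Fin d → ℕ => (ek d σ k x)^2) := by
  have : (fun k : Fin d → ℕ => (ek d σ k x)^2)
      = fun k => cP d σ k x * Real.exp (-(2 * σ^2 * ‖x‖^2)) := by
    ext k; exact ek_sq_eq x k
  rw [this]
  exact (summable_cP x).mul_right _

lemma tsum_ek_sq_le_one : ∑' k : Fin d → ℕ, (ek d σ k x)^2 ≤ 1 :=
  Summable.tsum_le_of_sum_le (summable_ek_sq x) (fun S => sum_ek_sq_le_one x S)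

/-- the tail bound -/
lemma tail_ek_sq (hx : ‖x‖ ≤ 1) (M : ℕ) (Q : (Fin d → ℕ) → Prop)
    (hQ : ∀ k, Q k → M ≤ ∑ i, k i) :
    ∑' k : {k : Fin d → ℕ // Q k}, (ek d σ (↑k) x)^2
      ≤ (2*σ^2)^M / (Nat.factorial M : ℝ) := by
  have hsummable : Summable (fun k : {k : Fin d → ℕ // Q k} => (ek d σ (↑k) x)^2) :=
    (summable_ek_sq x).subtype _
  apply Summable.tsum_le_of_sum_le hsummable
  intro T
  set S : Finset (Fin d → ℕ) := T.image Subtype.val with hSdef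
  have heq : ∑ k ∈ S, (ek d σ k x)^2 = ∑ k ∈ T, (ek d σ (↑k) x)^2 :=
    Finset.sum_image (fun a _ b _ hab => Subtype.val_injective hab)
  rw [← heq]
  have hSlev : ∀ k ∈ S, M ≤ ∑ i, k i := by
    intro k hk
    rw [hSdef, Finset.mem_image] at hk
    obtain ⟨⟨k', hk'⟩, _, rfl⟩ := hk
    exact hQ _ hk'
  have h1 : ∑ k ∈ S, (ek d σ k x)^2
      = (∑ k ∈ S, cP d σ k x) * Real.exp (-(2 * σ^2 * ‖x‖^2)) := by
    rw [Finset.sum_mul]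
    exact Finset.sum_congr rfl (fun k _ => ek_sq_eq x k)
  rw [h1]
  set t := 2*σ^2*‖x‖^2 with ht
  have ht0 : 0 ≤ t := by positivity
  have h2 : (∑ k ∈ S, cP d σ k x) ≤ t^M / (Nat.factorial M : ℝ) * Real.exp t :=
    cP_finsum_le x M S hSlev
  have hM0 : (0:ℝ) < (Nat.factorial M : ℝ) := by exact_mod_cast Nat.factorial_pos M
  calc (∑ k ∈ S, cP d σ k x) * Real.exp (-t)
      ≤ (t^M / (Nat.factorial M : ℝ) * Real.exp t) * Real.exp (-t) := by
        apply mul_le_mul_of_nonneg_right h2 (Real.exp_nonneg _)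
    _ = t^M / (Nat.factorial M : ℝ) := by rw [mul_assoc, ← Real.exp_add]; simp
    _ ≤ (2*σ^2)^M / (Nat.factorial M : ℝ) := by
        have htle : t ≤ 2*σ^2 := by
          calc t = 2*σ^2*‖x‖^2 := ht
            _ ≤ 2*σ^2*1 := by
                apply mul_le_mul_of_nonneg_left ?_ (by positivity)
                calc ‖x‖^2 ≤ 1^2 := by apply pow_le_pow_left₀ (norm_nonneg x) hx
                  _ = 1 := one_pow 2
            _ = 2*σ^2 := by ring
        gcongr

end EkLemmas

/-- Cauchy-Schwarz for tsum of nonneg sequences -/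
lemma tsum_CS {ι : Type*} (f g : ι → ℝ) (hf0 : ∀ i, 0 ≤ f i) (hg0 : ∀ i, 0 ≤ g i)
    (hf : Summable (fun i => f i ^ 2)) (hg : Summable (fun i => g i ^ 2))
    (hfg : Summable (fun i => f i * g i)) :
    ∑' i, f i * g i ≤ Real.sqrt (∑' i, f i ^ 2) * Real.sqrt (∑' i, g i ^ 2) := by
  apply Summable.tsum_le_of_sum_le hfg
  intro S
  have h1 : (∑ i ∈ S, f i * g i)^2 ≤ (∑ i ∈ S, f i ^ 2) * ∑ i ∈ S, g i ^ 2 :=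
    Finset.sum_mul_sq_le_sq_mul_sq S f g
  have h2 : ∑ i ∈ S, f i * g i ≤ Real.sqrt ((∑ i ∈ S, f i ^ 2) * ∑ i ∈ S, g i ^ 2) := by
    have h3 : 0 ≤ ∑ i ∈ S, f i * g i :=
      Finset.sum_nonneg (fun i _ => mul_nonneg (hf0 i) (hg0 i))
    nlinarith [Real.sq_sqrt (le_trans (sq_nonneg _) h1 : (0:ℝ) ≤ (∑ i ∈ S, f i ^ 2) * ∑ i ∈ S, g i ^ 2), Real.sqrt_nonneg ((∑ i ∈ S, f i ^ 2) * ∑ i ∈ S, g i ^ 2)]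
  refine h2.trans ?_
  rw [Real.sqrt_mul (Finset.sum_nonneg (fun i _ => sq_nonneg _))]
  apply mul_le_mul
  · exact Real.sqrt_le_sqrt (Summable.sum_le_tsum S (fun i _ => sq_nonneg _) hf)
  · exact Real.sqrt_le_sqrt (Summable.sum_le_tsum S (fun i _ => sq_nonneg _) hg)
  · exact Real.sqrt_nonneg _
  · exact Real.sqrt_nonneg _

lemma prod_range_add_factorial (m d : ℕ) :
    (∏ i ∈ Finset.range d, (m+1+i)) * m.factorial = (m+d).factorial := by
  induction d with
  | zero => simp
  | succ d ih =>
    rw [Finset.prod_range_succ, show m+(d+1) = (m+d)+1 from rfl, Nat.factorial_succ, ← ih]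
    ring

lemma gbinom_nat (m d : ℕ) : gbinom (m : ℝ) d = ((m+d).choose d : ℝ) := by
  unfold gbinom
  rw [Nat.cast_choose ℝ (show d ≤ m+d by omega)]
  have h : (∏ i ∈ Finset.range d, ((m:ℝ) + i + 1))
      = ((∏ i ∈ Finset.range d, (m+1+i) : ℕ) : ℝ) := by
    push_cast
    apply Finset.prod_congr rfl
    intro i _
    ring
  have key : ((∏ i ∈ Finset.range d, (m+1+i) : ℕ) : ℝ) * (m.factorial : ℝ)
      = ((m+d).factorial : ℝ) := by exact_mod_cast congrArg (fun z : ℕ => (z:ℝ)) (prod_range_add_factorial m d)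
  have hd : (0:ℝ) < (d.factorial : ℝ) := by exact_mod_cast Nat.factorial_pos d
  have hm : (0:ℝ) < (m.factorial : ℝ) := by exact_mod_cast Nat.factorial_pos m
  rw [h, show m + d - d = m by omega, div_eq_div_iff hd.ne' (by positivity)]
  linear_combination (d.factorial : ℝ) * key

lemma gbinom_mono (d : ℕ) {s t : ℝ} (hs : 0 ≤ s) (hst : s ≤ t) : gbinom s d ≤ gbinom t d := by
  unfold gbinom
  have hdf : (0:ℝ) < (Nat.factorial d : ℝ) := by exact_mod_cast Nat.factorial_pos d
  rw [div_le_div_iff₀ hdf hdf]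
  apply mul_le_mul_of_nonneg_right ?_ hdf.le
  apply Finset.prod_le_prod
  · intro i _
    positivity
  · intro i _
    linarith


set_option maxHeartbeats 2000000 in
theorem log_covN_UBall_le_gbinom_mul (d : ℕ) (hd : 1 ≤ d) (σ : ℝ) (hσ : 0 < σ)
    (ε : ℝ) (hε : 0 < ε) (hε1 : ε ≤ 1)
    (y w : ℝ) (hy : y = Real.log (4 / ε))
    (hwpos : 0 < w) (hw : w * Real.exp w = y / (Real.exp 1 * σ ^ 2)) :
    Real.log (covN ε (UBall d σ (B2 d))) ≤ gbinom (2 * y / w) d * y := by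
  classical
  have hy0 : 0 < y := by
    rw [hy]
    apply Real.log_pos
    rw [lt_div_iff₀ hε]
    linarith
  set t0 : ℝ := 2*y/w with ht0def
  have ht0pos : 0 < t0 := div_pos (by linarith) hwpos
  have hEpos : (0:ℝ) < Real.exp 1 * σ^2 := by positivity
  have hyid : y = Real.exp 1 * σ^2 * (w * Real.exp w) := by
    rw [hw]
    field_simp
  have ht0id : t0 = (2*σ^2) * Real.exp 1 * Real.exp w := by
    rw [ht0def, hyid]
    field_simp
  set M : ℕ := ⌈t0⌉₊ with hMdef
  have hM1 : 1 ≤ M := Nat.ceil_pos.mpr ht0pos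
  have hMget0 : t0 ≤ (M:ℝ) := Nat.le_ceil t0
  have hMlt : (M:ℝ) < t0 + 1 := Nat.ceil_lt_add_one ht0pos.le
  set m : ℕ := M - 1 with hmdef
  have hmM : m + 1 = M := by omega
  have hMpos : (0:ℝ) < (M:ℝ) := by exact_mod_cast hM1
  have hfactpos : (0:ℝ) < (Nat.factorial M : ℝ) := by exact_mod_cast Nat.factorial_pos M
  -- tail numeric bound
  have hexpy : Real.exp (-y) = ε/4 := by
    rw [hy, Real.exp_neg, Real.exp_log (by positivity)]
    field_simp
  have htail_num : (2*σ^2)^M / (Nat.factorial M : ℝ) ≤ (ε/4)^2 := by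
    have h1 : (M:ℝ)^M ≤ (Nat.factorial M : ℝ) * Real.exp 1 ^ M := pow_le_factorial_mul_exp M
    have step1 : (2*σ^2)^M / (Nat.factorial M : ℝ) ≤ ((2*σ^2) * Real.exp 1 / M)^M := by
      rw [div_pow, div_le_div_iff₀ hfactpos (by positivity)]
      calc (2*σ^2)^M * (M:ℝ)^M
          ≤ (2*σ^2)^M * ((Nat.factorial M : ℝ) * Real.exp 1 ^ M) :=
            mul_le_mul_of_nonneg_left h1 (by positivity)
        _ = ((2*σ^2) * Real.exp 1)^M * (Nat.factorial M : ℝ) := by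
            rw [mul_pow]; ring
    have step2 : (2*σ^2) * Real.exp 1 / M ≤ Real.exp (-w) := by
      rw [div_le_iff₀ hMpos]
      have hAe : (2*σ^2) * Real.exp 1 = t0 * Real.exp (-w) := by
        rw [ht0id, mul_assoc, mul_assoc, ← Real.exp_add]
        simp
      rw [hAe]
      apply mul_le_mul_of_nonneg_right hMget0 (Real.exp_nonneg _) |>.trans_eq
      ring
    have step3 : ((2*σ^2) * Real.exp 1 / M)^M ≤ (Real.exp (-w))^M :=
      pow_le_pow_left₀ (by positivity) step2 M
    have step4 : (Real.exp (-w))^M = Real.exp ((M:ℝ) * (-w)) := (Real.exp_nat_mul (-w) M).symm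
    have step5 : Real.exp ((M:ℝ) * (-w)) ≤ Real.exp (-(2*y)) := by
      apply Real.exp_le_exp.mpr
      have : 2*y ≤ w * M := by
        have h2 : w * t0 = 2*y := by
          rw [ht0def]
          field_simp
        rw [← h2]
        exact mul_le_mul_of_nonneg_left hMget0 hwpos.le
      nlinarith
    have step6 : Real.exp (-(2*y)) = (ε/4)^2 := by
      rw [show -(2*y) = (-y) + (-y) by ring, Real.exp_add, hexpy, sq]
    calc (2*σ^2)^M / (Nat.factorial M : ℝ)
        ≤ ((2*σ^2) * Real.exp 1 / M)^M := step1
      _ ≤ (Real.exp (-w))^M := step3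
      _ = Real.exp ((M:ℝ) * (-w)) := step4
      _ ≤ Real.exp (-(2*y)) := step5
      _ = (ε/4)^2 := step6
  have htail_sqrt : Real.sqrt ((2*σ^2)^M / (Nat.factorial M : ℝ)) ≤ ε/4 := by
    calc Real.sqrt ((2*σ^2)^M / (Nat.factorial M : ℝ))
        ≤ Real.sqrt ((ε/4)^2) := Real.sqrt_le_sqrt htail_num
      _ = ε/4 := Real.sqrt_sq (by positivity)
  -- index set
  set K := Kfin d m with hKdef
  haveI hKne : Nonempty ↥K := ⟨⟨0, by rw [hKdef, mem_Kfin]; simp⟩⟩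
  set δ : ℝ := 3*ε/4 with hδdef
  have hδpos : 0 < δ := by rw [hδdef]; positivity
  obtain ⟨P, hPcard, hPcover⟩ := net_exists (ι := ↥K) hδpos
  set n := P.card with hndef
  have hn1 : 1 ≤ n := by
    obtain ⟨p, hp, _⟩ := hPcover 0 (Metric.mem_closedBall_self (by norm_num))
    exact Finset.card_pos.mpr ⟨p, hp⟩
  -- |ek| ≤ 1 everywhere
  have hek_le_one : ∀ (z : EuclideanSpace ℝ (Fin d)) (k : Fin d → ℕ), |ek d σ k z| ≤ 1 := by
    intro z k
    rw [← sq_le_one_iff_abs_le_one]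
    have := sum_ek_sq_le_one (σ := σ) z {k}
    simpa using this
  -- candidate functions
  set g : Fin n → (↥(B2 d) → ℝ) := fun i x =>
    ∑ k : ↥K, (↑(P.equivFin.symm i) : EuclideanSpace ℝ ↥K) k * ek d σ (↑k) ↑x with hgdef
  -- membership in the covering-number set
  have hmem : n ∈ {n : ℕ | ∃ g : Fin n → (↥(B2 d) → ℝ),
      (∀ i, ∃ C : ℝ, ∀ y, |g i y| ≤ C) ∧
      ∀ f ∈ UBall d σ (B2 d), ∃ i, ∀ y, |f y - g i y| ≤ ε} := by
    refine ⟨g, ?_, ?_⟩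
    · -- boundedness
      intro i
      refine ⟨∑ k : ↥K, |(↑(P.equivFin.symm i) : EuclideanSpace ℝ ↥K) k|, ?_⟩
      intro x
      rw [hgdef]
      calc |∑ k : ↥K, (↑(P.equivFin.symm i) : EuclideanSpace ℝ ↥K) k * ek d σ (↑k) ↑x|
          ≤ ∑ k : ↥K, |(↑(P.equivFin.symm i) : EuclideanSpace ℝ ↥K) k * ek d σ (↑k) ↑x| :=
            Finset.abs_sum_le_sum_abs _ _
        _ ≤ ∑ k : ↥K, |(↑(P.equivFin.symm i) : EuclideanSpace ℝ ↥K) k| := by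
            apply Finset.sum_le_sum
            intro k _
            rw [abs_mul]
            exact mul_le_of_le_one_right (abs_nonneg _) (hek_le_one _ _)
    · -- covering
      rintro f ⟨a, ha_sum, ha_le, habs, hrepr⟩
      -- the coefficient vector
      set α : EuclideanSpace ℝ ↥K := WithLp.toLp 2 (fun k => a ↑k) with hαdef
      have hαsum : ∑ k : ↥K, (a ↑k)^2 ≤ 1 := by
        calc ∑ k : ↥K, (a ↑k)^2 = ∑ k ∈ K, (a k)^2 := Finset.sum_coe_sort K (fun k => (a k)^2)
          _ ≤ ∑' k, (a k)^2 := Summable.sum_le_tsum K (fun k _ => sq_nonneg _) ha_sum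
          _ ≤ 1 := ha_le
      have hαball : α ∈ Metric.closedBall (0 : EuclideanSpace ℝ ↥K) 1 := by
        rw [Metric.mem_closedBall, dist_zero_right]
        rw [EuclideanSpace.norm_eq]
        apply sqrt_le_one'
        calc ∑ k : ↥K, ‖α k‖^2 = ∑ k : ↥K, (a ↑k)^2 := by
              apply Finset.sum_congr rfl
              intro k _
              rw [Real.norm_eq_abs, sq_abs]
          _ ≤ 1 := hαsum
      obtain ⟨p, hpP, hdistp⟩ := hPcover α hαball
      refine ⟨P.equivFin ⟨p, hpP⟩, ?_⟩
      intro x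
      have hgx : g (P.equivFin ⟨p, hpP⟩) x = ∑ k : ↥K, p k * ek d σ (↑k) ↑x := by
        rw [hgdef]
        simp only [Equiv.symm_apply_apply]
      have hxball : ‖(↑x : EuclideanSpace ℝ (Fin d))‖ ≤ 1 := by
        have hx2 : (↑x : EuclideanSpace ℝ (Fin d)) ∈ Metric.closedBall 0 1 := x.2
        rwa [Metric.mem_closedBall, dist_zero_right] at hx2
      -- split f x
      have hsum_f : Summable (fun k => a k * ek d σ k ↑x) := (habs x).of_abs
      have hsplit : ∑ k ∈ K, a k * ek d σ k ↑x
            + ∑' k : {k : Fin d → ℕ // k ∉ K}, a ↑k * ek d σ ↑k ↑x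
          = ∑' k, a k * ek d σ k ↑x := Summable.sum_add_tsum_subtype_compl hsum_f K
      set T : ℝ := ∑' k : {k : Fin d → ℕ // k ∉ K}, a ↑k * ek d σ ↑k ↑x with hTdef
      have hfx : f x = ∑ k ∈ K, a k * ek d σ k ↑x + T := by
        rw [hrepr x, ← hsplit]
      -- head estimate
      have hhead : |∑ k ∈ K, a k * ek d σ k ↑x - ∑ k : ↥K, p k * ek d σ (↑k) ↑x| ≤ δ := by
        have hsum1 : ∑ k ∈ K, a k * ek d σ k ↑x
            = ∑ k : ↥K, a ↑k * ek d σ (↑k) ↑x :=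
          (Finset.sum_coe_sort K (fun k => a k * ek d σ k ↑x)).symm
        rw [hsum1, ← Finset.sum_sub_distrib]
        have hterm : ∀ k : ↥K, a ↑k * ek d σ (↑k) ↑x - p k * ek d σ (↑k) ↑x
            = (a ↑k - p k) * ek d σ (↑k) ↑x := fun k => by ring
        rw [Finset.sum_congr rfl (fun k _ => hterm k)]
        -- Cauchy-Schwarz
        have hCS := Finset.sum_mul_sq_le_sq_mul_sq Finset.univ
          (fun k : ↥K => a ↑k - p k) (fun k : ↥K => ek d σ (↑k) ↑x)
        have habs2 : |∑ k : ↥K, (a ↑k - p k) * ek d σ (↑k) ↑x|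
            ≤ Real.sqrt ((∑ k : ↥K, (a ↑k - p k)^2) * ∑ k : ↥K, (ek d σ (↑k) ↑x)^2) := by
          rw [← Real.sqrt_sq_eq_abs]
          exact Real.sqrt_le_sqrt hCS
        have hdistsq : Real.sqrt (∑ k : ↥K, (a ↑k - p k)^2) = dist α p := by
          rw [EuclideanSpace.dist_eq]
          congr 1
          apply Finset.sum_congr rfl
          intro k _
          rw [Real.dist_eq, sq_abs]
        have heksum : ∑ k : ↥K, (ek d σ (↑k) ↑x)^2 ≤ 1 := by
          calc ∑ k : ↥K, (ek d σ (↑k) ↑x)^2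
              = ∑ k ∈ K, (ek d σ k ↑x)^2 :=
                Finset.sum_coe_sort K (fun k => (ek d σ k ↑x)^2)
            _ ≤ 1 := sum_ek_sq_le_one _ K
        calc |∑ k : ↥K, (a ↑k - p k) * ek d σ (↑k) ↑x|
            ≤ Real.sqrt ((∑ k : ↥K, (a ↑k - p k)^2) * ∑ k : ↥K, (ek d σ (↑k) ↑x)^2) := habs2
          _ = Real.sqrt (∑ k : ↥K, (a ↑k - p k)^2) * Real.sqrt (∑ k : ↥K, (ek d σ (↑k) ↑x)^2) :=
              Real.sqrt_mul (Finset.sum_nonneg (fun k _ => sq_nonneg _)) _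
          _ ≤ δ * 1 := by
              apply mul_le_mul
              · rw [hdistsq]; exact hdistp
              · exact sqrt_le_one' heksum
              · exact Real.sqrt_nonneg _
              · exact hδpos.le
          _ = δ := mul_one δ
      -- tail estimate
      have htailQ : ∀ k : Fin d → ℕ, k ∉ K → M ≤ ∑ i, k i := by
        intro k hk
        rw [hKdef, mem_Kfin] at hk
        omega
      have htail : |T| ≤ ε/4 := by
        have hsummable_abs : Summable (fun k : {k : Fin d → ℕ // k ∉ K} =>
            |a ↑k * ek d σ ↑k ↑x|) := (habs x).subtype _
        have habsT : |T| ≤ ∑' k : {k : Fin d → ℕ // k ∉ K}, |a ↑k * ek d σ ↑k ↑x| := by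
          rw [hTdef]
          have hs' : Summable (fun k : {k : Fin d → ℕ // k ∉ K} => ‖a ↑k * ek d σ ↑k ↑x‖) := by
            simpa only [Real.norm_eq_abs] using hsummable_abs
          simpa only [Real.norm_eq_abs] using norm_tsum_le_tsum_norm hs'
        have hCS2 : ∑' k : {k : Fin d → ℕ // k ∉ K}, |a ↑k * ek d σ ↑k ↑x|
            ≤ Real.sqrt (∑' k : {k : Fin d → ℕ // k ∉ K}, (a ↑k)^2)
              * Real.sqrt (∑' k : {k : Fin d → ℕ // k ∉ K}, (ek d σ ↑k ↑x)^2) := by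
          have heq2 : (fun k : {k : Fin d → ℕ // k ∉ K} => |a ↑k * ek d σ ↑k ↑x|)
              = fun k : {k : Fin d → ℕ // k ∉ K} => |a ↑k| * |ek d σ (↑k) ↑x| := by
            funext k
            rw [abs_mul]
          rw [heq2]
          have h1 := tsum_CS (fun k : {k : Fin d → ℕ // k ∉ K} => |a ↑k|)
            (fun k => |ek d σ ↑k ↑x|) (fun k => abs_nonneg _) (fun k => abs_nonneg _)
            ?_ ?_ ?_
          · convert h1 using 3 <;> simp [sq_abs]
          · have := ha_sum.subtype {k : Fin d → ℕ | k ∉ K}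
            apply this.congr
            intro k
            simp [sq_abs]
          · have := (summable_ek_sq (σ := σ) (↑x : EuclideanSpace ℝ (Fin d))).subtype
              {k : Fin d → ℕ | k ∉ K}
            apply this.congr
            intro k
            simp [sq_abs]
          · apply hsummable_abs.congr
            intro k
            rw [abs_mul]
        have hb1 : ∑' k : {k : Fin d → ℕ // k ∉ K}, (a ↑k)^2 ≤ 1 := by
          calc ∑' k : {k : Fin d → ℕ // k ∉ K}, (a ↑k)^2
              ≤ ∑' k, (a k)^2 :=
                Summable.tsum_subtype_le (fun k => (a k)^2) _ (fun k => sq_nonneg _) ha_sum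
            _ ≤ 1 := ha_le
        have hb2 : ∑' k : {k : Fin d → ℕ // k ∉ K}, (ek d σ ↑k ↑x)^2
            ≤ (2*σ^2)^M / (Nat.factorial M : ℝ) :=
          tail_ek_sq (σ := σ) _ hxball M _ htailQ
        calc |T| ≤ ∑' k : {k : Fin d → ℕ // k ∉ K}, |a ↑k * ek d σ ↑k ↑x| := habsT
          _ ≤ Real.sqrt (∑' k : {k : Fin d → ℕ // k ∉ K}, (a ↑k)^2)
              * Real.sqrt (∑' k : {k : Fin d → ℕ // k ∉ K}, (ek d σ ↑k ↑x)^2) := hCS2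
          _ ≤ 1 * (ε/4) := by
              apply mul_le_mul
              · exact sqrt_le_one' hb1
              · exact le_trans (Real.sqrt_le_sqrt hb2) htail_sqrt
              · exact Real.sqrt_nonneg _
              · norm_num
          _ = ε/4 := one_mul _
      -- combine
      rw [hfx, hgx]
      calc |∑ k ∈ K, a k * ek d σ k ↑x + T - ∑ k : ↥K, p k * ek d σ (↑k) ↑x|
          ≤ |∑ k ∈ K, a k * ek d σ k ↑x - ∑ k : ↥K, p k * ek d σ (↑k) ↑x| + |T| := by
            have : ∑ k ∈ K, a k * ek d σ k ↑x + T - ∑ k : ↥K, p k * ek d σ (↑k) ↑x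
                = (∑ k ∈ K, a k * ek d σ k ↑x - ∑ k : ↥K, p k * ek d σ (↑k) ↑x) + T := by ring
            rw [this]
            exact abs_add_le _ _
        _ ≤ δ + ε/4 := add_le_add hhead htail
        _ = ε := by rw [hδdef]; ring
  have hcovle : covN ε (UBall d σ (B2 d)) ≤ n := by
    unfold covN
    exact Nat.sInf_le hmem
  -- numeric conclusion
  set D : ℕ := (m+d).choose d with hDdef
  have hcardK : Fintype.card ↥K = D := by
    rw [Fintype.card_coe, hKdef, card_Kfin]
  have hbase : 1 + 2/δ ≤ 4/ε := by
    rw [hδdef]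
    have heq3 : 1 + 2/(3*ε/4) = (3*ε+8)/(3*ε) := by
      field_simp
      ring
    rw [heq3, div_le_div_iff₀ (by positivity) hε]
    nlinarith
  have hnD : (n:ℝ) ≤ (4/ε)^D := by
    rw [← hcardK]
    refine hPcard.trans ?_
    apply pow_le_pow_left₀ (by positivity) hbase
  have hDg : (D:ℝ) ≤ gbinom t0 d := by
    rw [hDdef, ← gbinom_nat]
    apply gbinom_mono d (by positivity)
    have hmcast : (m:ℝ) = (M:ℝ) - 1 := by
      rw [hmdef]
      push_cast [Nat.cast_sub hM1]
      ring
    rw [hmcast]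
    linarith
  have hlogn : Real.log n ≤ (D:ℝ) * y := by
    calc Real.log n ≤ Real.log ((4/ε)^D) := by
          apply Real.log_le_log (Nat.cast_pos.mpr (Nat.lt_of_lt_of_le Nat.zero_lt_one hn1)) hnD
      _ = (D:ℝ) * Real.log (4/ε) := by rw [Real.log_pow]
      _ = (D:ℝ) * y := by rw [hy]
  have hfinal : Real.log (covN ε (UBall d σ (B2 d))) ≤ Real.log n := by
    rcases Nat.eq_zero_or_pos (covN ε (UBall d σ (B2 d))) with hzero | hpos
    · rw [hzero]
      simp only [Nat.cast_zero, Real.log_zero]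
      apply Real.log_nonneg
      exact_mod_cast hn1
    · apply Real.log_le_log (by exact_mod_cast hpos)
      exact_mod_cast hcovle
  calc Real.log (covN ε (UBall d σ (B2 d))) ≤ Real.log n := hfinal
    _ ≤ (D:ℝ) * y := hlogn
    _ ≤ gbinom t0 d * y := mul_le_mul_of_nonneg_right hDg hy0.le
end

section
/- For all σ > 0 and p > 0 there exist constants c > 0 and C > 0 such that for every integer d ≥ 2 the following holds: letting w_d > 0 be the unique positive real with w_d·e^{w_d} = (d+1)/(pσ²) and t₀ := (2(d+1)·4^{p/(d+1)}/(e·p·w_d))·exp(1/w_d), one has binom(t₀+d, d)·((d+1)/(e·p))·4^{p/(d+1)} ≤ C·sqrt(d·ln(d))·exp(c·d·ln(ln(d))/ln(d)). -/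
open Real Filter

private lemma log_le_half {x : ℝ} (hx : 0 < x) : Real.log x ≤ x / 2 := by
  have hs : 0 < Real.sqrt x := Real.sqrt_pos.mpr hx
  have h1 : Real.log (Real.sqrt x) ≤ Real.sqrt x - 1 := Real.log_le_sub_one_of_pos hs
  have h2 : Real.log (Real.sqrt x) = Real.log x / 2 := Real.log_sqrt hx.le
  have h3 : Real.sqrt x ^ 2 = x := Real.sq_sqrt hx.le
  nlinarith [sq_nonneg (Real.sqrt x - 2)]

private lemma sq_log_le {d : ℝ} (hd : 1 ≤ d) : (Real.log d)^2 ≤ d := by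
  have hL0 : 0 ≤ Real.log d := Real.log_nonneg hd
  rcases le_or_gt (Real.log d) 1 with h | h
  · nlinarith
  · have hL1 : 0 < Real.log d := by linarith
    have h2 : Real.log ((Real.log d)^2) = 2 * Real.log (Real.log d) := by
      rw [Real.log_pow]; push_cast; ring
    have h3 : Real.log (Real.log d) ≤ Real.log d / 2 := log_le_half hL1
    have h4 : (Real.log d)^2 = Real.exp (Real.log ((Real.log d)^2)) :=
      (Real.exp_log (by positivity)).symm
    have h5 : Real.exp (Real.log d) = d := Real.exp_log (by linarith)
    calc (Real.log d)^2 = Real.exp (Real.log ((Real.log d)^2)) := h4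
      _ ≤ Real.exp (Real.log d) := Real.exp_le_exp.mpr (by linarith)
      _ = d := h5

private lemma pow_self_le_factorial_mul_exp (n : ℕ) :
    (n:ℝ)^n ≤ (Nat.factorial n : ℝ) * Real.exp n := by
  induction n with
  | zero => simp
  | succ m ih =>
    rcases Nat.eq_zero_or_pos m with hm | hm
    · subst hm
      simp [Nat.factorial]
    · have hm0 : (0:ℝ) < m := by exact_mod_cast hm
      have key : ((m:ℝ)+1)^m ≤ (m:ℝ)^m * Real.exp 1 := by
        have h1 : ((m:ℝ)+1) = (m:ℝ) * (1 + 1/(m:ℝ)) := by field_simp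
        have h2 : (1 + 1/(m:ℝ)) ≤ Real.exp (1/(m:ℝ)) := by
          have := Real.add_one_le_exp (1/(m:ℝ)); linarith
        have h3 : (1 + 1/(m:ℝ))^m ≤ Real.exp (1/(m:ℝ)) ^ m :=
          pow_le_pow_left₀ (by positivity) h2 m
        have h4 : Real.exp (1/(m:ℝ)) ^ m = Real.exp 1 := by
          rw [← Real.exp_nat_mul]
          congr 1; field_simp
        calc ((m:ℝ)+1)^m = (m:ℝ)^m * (1+1/(m:ℝ))^m := by rw [h1, mul_pow]
          _ ≤ (m:ℝ)^m * Real.exp 1 := by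
              rw [← h4]
              exact mul_le_mul_of_nonneg_left h3 (by positivity)
      have hexp : Real.exp ((m:ℝ)) * Real.exp 1 = Real.exp ((m:ℝ)+1) := by
        rw [← Real.exp_add]
      have hfpos : (0:ℝ) ≤ (Nat.factorial m : ℝ) := by positivity
      calc ((m+1:ℕ):ℝ)^(m+1) = ((m:ℝ)+1)*((m:ℝ)+1)^m := by push_cast; ring
        _ ≤ ((m:ℝ)+1)*((m:ℝ)^m * Real.exp 1) := by
            apply mul_le_mul_of_nonneg_left key (by positivity)
        _ ≤ ((m:ℝ)+1)*(((Nat.factorial m : ℝ) * Real.exp m) * Real.exp 1) := by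
            apply mul_le_mul_of_nonneg_left
              (mul_le_mul_of_nonneg_right ih (Real.exp_pos 1).le) (by positivity)
        _ = ((Nat.factorial (m+1) : ℝ)) * Real.exp ((m+1:ℕ):ℝ) := by
            rw [Nat.factorial_succ]; push_cast; rw [← hexp]; ring

private lemma prod_shift (n d : ℕ) :
    ∏ i ∈ Finset.range d, ((n:ℝ) + i + 1) = (Nat.factorial (n+d) : ℝ) / (Nat.factorial n : ℝ) := by
  have hfn : (Nat.factorial n : ℝ) ≠ 0 := by positivity
  induction d with
  | zero => simp [div_self hfn]
  | succ m ih =>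
    rw [Finset.prod_range_succ, ih]
    have h : Nat.factorial (n + (m+1)) = (n + m + 1) * Nat.factorial (n+m) := by
      rw [show n + (m+1) = (n+m)+1 by ring, Nat.factorial_succ]
    rw [h]
    push_cast
    field_simp

private lemma factorial_add_le (n d : ℕ) :
    Nat.factorial (n + d) ≤ Nat.factorial d * (n + d)^n := by
  induction n with
  | zero => simp
  | succ m ih =>
    have h1 : Nat.factorial (m + 1 + d) = (m + d + 1) * Nat.factorial (m + d) := by
      rw [show m+1+d = (m+d)+1 by ring, Nat.factorial_succ]
    calc Nat.factorial (m+1+d) = (m+d+1) * Nat.factorial (m+d) := h1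
      _ ≤ (m+d+1) * (Nat.factorial d * (m+d)^m) := Nat.mul_le_mul_left _ ih
      _ ≤ Nat.factorial d * (m+1+d)^(m+1) := by
          have h2 : (m+d)^m ≤ (m+1+d)^m := Nat.pow_le_pow_left (by omega) m
          calc (m+d+1) * (Nat.factorial d * (m+d)^m)
              = Nat.factorial d * ((m+d)^m * (m+d+1)) := by ring
            _ ≤ Nat.factorial d * ((m+1+d)^m * (m+1+d)) := by
                exact Nat.mul_le_mul_left _ (Nat.mul_le_mul h2 (by omega))
            _ = Nat.factorial d * (m+1+d)^(m+1) := by ring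

private lemma gbinom_le {t : ℝ} (ht : 0 < t) (d : ℕ) :
    gbinom t d ≤ Real.exp ((t+1) * (1 + Real.log (1 + d / t))) := by
  set n := ⌈t⌉₊ with hn
  have htn : t ≤ n := Nat.le_ceil t
  have hn1 : 1 ≤ n := Nat.ceil_pos.mpr ht
  have hn1' : (1:ℝ) ≤ (n:ℝ) := by exact_mod_cast hn1
  have hnt1 : (n:ℝ) ≤ t + 1 := le_of_lt (Nat.ceil_lt_add_one ht.le)
  have hnpos : (0:ℝ) < (n:ℝ) := by linarith
  have hfacd : (0:ℝ) < (Nat.factorial d : ℝ) := by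
    exact_mod_cast d.factorial_pos
  have hfacn : (0:ℝ) < (Nat.factorial n : ℝ) := by
    exact_mod_cast n.factorial_pos
  have h1 : ∏ i ∈ Finset.range d, (t + (i:ℝ) + 1) ≤ ∏ i ∈ Finset.range d, ((n:ℝ) + i + 1) := by
    apply Finset.prod_le_prod
    · intro i _
      have : (0:ℝ) ≤ (i:ℝ) := Nat.cast_nonneg i
      linarith
    · intro i _; linarith
  have h3 : (Nat.factorial (n+d) : ℝ) ≤ (Nat.factorial d : ℝ) * ((n:ℝ)+(d:ℝ))^n := by
    have := factorial_add_le n d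
    have h := (Nat.cast_le (α := ℝ)).mpr this
    push_cast at h
    convert h using 2 <;> push_cast <;> ring
  have h4 : gbinom t d ≤ ((n:ℝ)+(d:ℝ))^n / (Nat.factorial n : ℝ) := by
    unfold gbinom
    rw [div_le_div_iff₀ hfacd hfacn]
    calc (∏ i ∈ Finset.range d, (t + (i:ℝ) + 1)) * (Nat.factorial n : ℝ)
        ≤ (∏ i ∈ Finset.range d, ((n:ℝ) + i + 1)) * (Nat.factorial n : ℝ) :=
          mul_le_mul_of_nonneg_right h1 hfacn.le
      _ = (Nat.factorial (n+d) : ℝ) := by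
          rw [prod_shift]; field_simp
      _ ≤ ((n:ℝ)+(d:ℝ))^n * (Nat.factorial d : ℝ) := by rw [mul_comm]; exact h3
  have h5 : ((n:ℝ)+(d:ℝ))^n / (Nat.factorial n : ℝ)
      ≤ ((n:ℝ)+(d:ℝ))^n * Real.exp n / (n:ℝ)^n := by
    rw [div_le_div_iff₀ hfacn (by positivity)]
    have h6 := pow_self_le_factorial_mul_exp n
    have hb : (0:ℝ) ≤ ((n:ℝ)+(d:ℝ))^n := by positivity
    calc ((n:ℝ)+(d:ℝ))^n * (n:ℝ)^n ≤ ((n:ℝ)+(d:ℝ))^n * ((Nat.factorial n : ℝ) * Real.exp n) :=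
          mul_le_mul_of_nonneg_left h6 hb
      _ = ((n:ℝ)+(d:ℝ))^n * Real.exp n * (Nat.factorial n : ℝ) := by ring
  have hnd : (0:ℝ) < (n:ℝ)+(d:ℝ) := by positivity
  have e1 : ((n:ℝ)+(d:ℝ))^n = Real.exp ((n:ℝ) * Real.log ((n:ℝ)+(d:ℝ))) := by
    rw [Real.exp_nat_mul, Real.exp_log hnd]
  have e2 : (n:ℝ)^n = Real.exp ((n:ℝ) * Real.log (n:ℝ)) := by
    rw [Real.exp_nat_mul, Real.exp_log hnpos]
  have e3 : ((n:ℝ)+(d:ℝ))^n * Real.exp n / (n:ℝ)^n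
      = Real.exp ((n:ℝ) * (1 + Real.log (1 + (d:ℝ)/(n:ℝ)))) := by
    rw [e1, e2, ← Real.exp_add, ← Real.exp_sub]
    congr 1
    have hlog : Real.log (1 + (d:ℝ)/(n:ℝ)) = Real.log ((n:ℝ)+(d:ℝ)) - Real.log (n:ℝ) := by
      rw [← Real.log_div hnd.ne' hnpos.ne']
      congr 1
      field_simp
    rw [hlog]; push_cast; ring
  have e4 : (n:ℝ) * (1 + Real.log (1 + (d:ℝ)/(n:ℝ)))
      ≤ (t+1) * (1 + Real.log (1 + (d:ℝ)/t)) := by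
    have hdt : (d:ℝ)/(n:ℝ) ≤ (d:ℝ)/t := by
      apply div_le_div_of_nonneg_left (Nat.cast_nonneg d) ht htn
    have hl : Real.log (1 + (d:ℝ)/(n:ℝ)) ≤ Real.log (1 + (d:ℝ)/t) := by
      apply Real.log_le_log (by positivity) (by linarith)
    have hl0 : 0 ≤ Real.log (1 + (d:ℝ)/(n:ℝ)) := by
      apply Real.log_nonneg
      have : (0:ℝ) ≤ (d:ℝ)/(n:ℝ) := by positivity
      linarith
    apply mul_le_mul hnt1 (by linarith) (by linarith) (by linarith)
  calc gbinom t d ≤ ((n:ℝ)+(d:ℝ))^n / (Nat.factorial n : ℝ) := h4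
    _ ≤ ((n:ℝ)+(d:ℝ))^n * Real.exp n / (n:ℝ)^n := h5
    _ = Real.exp ((n:ℝ) * (1 + Real.log (1 + (d:ℝ)/(n:ℝ)))) := e3
    _ ≤ Real.exp ((t+1) * (1 + Real.log (1 + (d:ℝ)/t))) := Real.exp_le_exp.mpr e4

private lemma X_ge_neg_two {d : ℝ} (hd : 2 ≤ d) :
    -2 ≤ d * Real.log (Real.log d) / Real.log d := by
  have hL0 : 0 < Real.log d := Real.log_pos (by linarith)
  rcases le_or_gt 1 (Real.log d) with h | h
  · have h1 : 0 ≤ Real.log (Real.log d) := Real.log_nonneg h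
    have : 0 ≤ d * Real.log (Real.log d) / Real.log d := by positivity
    linarith
  · have hde : d < Real.exp 1 := by
      have hh : d = Real.exp (Real.log d) := (Real.exp_log (by linarith)).symm
      rw [hh]
      exact Real.exp_lt_exp.mpr h
    have hd3 : d < 2.7182818286 := lt_trans hde Real.exp_one_lt_d9
    have hl2 : (0.6931471803:ℝ) < Real.log d := by
      have := Real.log_two_gt_d9
      have h2 : Real.log 2 ≤ Real.log d := Real.log_le_log (by norm_num) hd
      linarith
    have hinv : Real.log (Real.log d)⁻¹ ≤ (Real.log d)⁻¹ - 1 :=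
      Real.log_le_sub_one_of_pos (by positivity)
    have hinv2 : Real.log (Real.log d)⁻¹ = - Real.log (Real.log d) := Real.log_inv _
    have key : -(Real.log (Real.log d)) * Real.log d ≤ 1 - Real.log d := by
      rw [hinv2] at hinv
      have h0 : (-(Real.log (Real.log d))) * Real.log d ≤ ((Real.log d)⁻¹ - 1) * Real.log d :=
        mul_le_mul_of_nonneg_right hinv hL0.le
      have h1 : ((Real.log d)⁻¹ - 1) * Real.log d = 1 - Real.log d := by
        field_simp
      linarith
    rw [le_div_iff₀ hL0]
    nlinarith [mul_le_mul_of_nonneg_left key (show (0:ℝ) ≤ d by linarith),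
      sq_nonneg (Real.log d - 1), sq_nonneg (Real.log d), hl2, hd3, hd, h, hL0]

private lemma half_log_le {w M : ℝ} (hw : 0 < w) (h : w * Real.exp w = M) :
    Real.log M / 2 ≤ w := by
  by_contra hcon
  push_neg at hcon
  set Lm := Real.log M / 2 with hLm
  have hLm0 : 0 < Lm := lt_trans hw hcon
  have hM0 : 0 < M := by
    rw [← h]; positivity
  have h1 : M < Lm * Real.exp Lm := by
    rw [← h]
    have he : Real.exp w < Real.exp Lm := Real.exp_lt_exp.mpr hcon
    nlinarith [Real.exp_pos w, Real.exp_pos Lm]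
  have h2 : Lm < Real.exp Lm := by nlinarith [Real.add_one_le_exp Lm]
  have h3 : Lm * Real.exp Lm < Real.exp Lm * Real.exp Lm := by
    nlinarith [Real.exp_pos Lm]
  have h4 : Real.exp Lm * Real.exp Lm = M := by
    rw [← Real.exp_add]
    have : Lm + Lm = Real.log M := by rw [hLm]; ring
    rw [this, Real.exp_log hM0]
  linarith

set_option maxHeartbeats 2000000 in
theorem poly_const_growth_in_d (σ p : ℝ) (hσ : 0 < σ) (hp : 0 < p) :
    ∃ c C : ℝ, 0 < c ∧ 0 < C ∧
      ∀ d : ℕ, 2 ≤ d → ∀ w : ℝ, 0 < w →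
        w * Real.exp w = ((d : ℝ) + 1) / (p * σ ^ 2) →
        gbinom (2 * ((d : ℝ) + 1) * (4 : ℝ) ^ (p / ((d : ℝ) + 1)) /
            (Real.exp 1 * p * w) * Real.exp (1 / w)) d *
          (((d : ℝ) + 1) / (Real.exp 1 * p)) * (4 : ℝ) ^ (p / ((d : ℝ) + 1)) ≤
        C * Real.sqrt ((d : ℝ) * Real.log d) *
          Real.exp (c * (d : ℝ) * Real.log (Real.log d) / Real.log d) := by
  have hep : (0:ℝ) < Real.exp 1 := Real.exp_pos 1
  obtain ⟨q, hqdef⟩ : ∃ q : ℝ, q = p * σ^2 := ⟨_, rfl⟩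
  have hq : 0 < q := by rw [hqdef]; positivity
  obtain ⟨A₀, hA0def⟩ : ∃ x : ℝ, x = (4:ℝ) ^ (p/3) := ⟨_, rfl⟩
  have hA₀1 : (1:ℝ) ≤ A₀ := by
    rw [hA0def, show (1:ℝ) = (4:ℝ)^(0:ℝ) from (Real.rpow_zero 4).symm]
    exact Real.rpow_le_rpow_of_exponent_le (by norm_num) (by positivity)
  have hA₀0 : (0:ℝ) < A₀ := lt_of_lt_of_le one_pos hA₀1
  obtain ⟨w₀, hw0def⟩ : ∃ x : ℝ, x = min 1 (3 / (Real.exp 1 * q)) := ⟨_, rfl⟩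
  have hw₀ : 0 < w₀ := by
    rw [hw0def]
    exact lt_min one_pos (div_pos (by norm_num) (mul_pos hep hq))
  have hw₀1 : w₀ ≤ 1 := by rw [hw0def]; exact min_le_left _ _
  obtain ⟨E, hEdef⟩ : ∃ x : ℝ, x = Real.exp (1 / w₀) := ⟨_, rfl⟩
  have hE1 : (1:ℝ) ≤ E := by
    rw [hEdef]; exact Real.one_le_exp (div_pos one_pos hw₀).le
  obtain ⟨K₁, hK1def⟩ : ∃ x : ℝ, x = 2 * A₀ * E / (Real.exp 1 * p) := ⟨_, rfl⟩
  have hK₁ : 0 < K₁ := by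
    rw [hK1def]
    exact div_pos (by nlinarith) (mul_pos hep hp)
  obtain ⟨c₁, hc1def⟩ : ∃ x : ℝ, x = Real.log 2 + max 0 (- Real.log q) := ⟨_, rfl⟩
  have hc₁ : 0 ≤ c₁ := by
    have h1 : (0:ℝ) ≤ Real.log 2 := Real.log_nonneg (by norm_num)
    have h2 : (0:ℝ) ≤ max 0 (- Real.log q) := le_max_left _ _
    rw [hc1def]; linarith
  obtain ⟨c₂, hc2def⟩ : ∃ x : ℝ, x = 1 + c₁ := ⟨_, rfl⟩
  have hc₂ : 1 ≤ c₂ := by rw [hc2def]; linarith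
  have hc₂0 : 0 < c₂ := by linarith
  obtain ⟨K₄, hK4def⟩ : ∃ x : ℝ, x = 2 / (Real.exp 1 * p * c₂) := ⟨_, rfl⟩
  have hK₄ : 0 < K₄ := by
    rw [hK4def]
    exact div_pos (by norm_num) (mul_pos (mul_pos hep hp) hc₂0)
  obtain ⟨c₃, hc3def⟩ : ∃ x : ℝ, x = Real.log (1 + 1/K₄) := ⟨_, rfl⟩
  have hc₃ : 0 ≤ c₃ := by
    rw [hc3def]
    exact Real.log_nonneg (by nlinarith [one_div_pos.mpr hK₄])
  obtain ⟨mx, hmxdef⟩ : ∃ x : ℝ, x = max 4 (2 * Real.log q) := ⟨_, rfl⟩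
  have hmx : (4:ℝ) ≤ mx := by rw [hmxdef]; exact le_max_left _ _
  have hmx0 : (0:ℝ) < mx := by linarith
  obtain ⟨K₃, hK3def⟩ : ∃ x : ℝ, x = 2 * K₁ * mx := ⟨_, rfl⟩
  have hK₃ : 0 < K₃ := by
    rw [hK3def]; exact mul_pos (mul_pos (by norm_num) hK₁) hmx0
  obtain ⟨K₅, hK5def⟩ : ∃ x : ℝ, x = K₃ * (1 + c₃) := ⟨_, rfl⟩
  have hK₅ : 0 < K₅ := by rw [hK5def]; nlinarith
  obtain ⟨c, hcdef⟩ : ∃ x : ℝ, x = K₃ + 1 := ⟨_, rfl⟩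
  have hc : 0 < c := by rw [hcdef]; linarith
  obtain ⟨K₂, hK2def⟩ : ∃ x : ℝ, x = A₀ / (Real.exp 1 * p) := ⟨_, rfl⟩
  have hK₂ : 0 < K₂ := by
    rw [hK2def]; exact div_pos hA₀0 (mul_pos hep hp)
  obtain ⟨D, hDdef⟩ : ∃ x : ℝ, x = max (Real.exp (Real.exp (K₅+3))) (max 3 (Real.exp 1 * q)) :=
    ⟨_, rfl⟩
  have hD3 : (3:ℝ) ≤ D := by
    rw [hDdef]
    exact le_trans (le_max_left 3 (Real.exp 1 * q)) (le_max_right _ _)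
  have hD0 : (0:ℝ) < D := by linarith
  obtain ⟨T, hTdef⟩ : ∃ x : ℝ, x = K₁ * (D+1) / w₀ := ⟨_, rfl⟩
  have hT : 0 < T := by
    rw [hTdef]; exact div_pos (mul_pos hK₁ (by linarith)) hw₀
  obtain ⟨B_I, hBIdef⟩ : ∃ x : ℝ, x = K₂ * (D+1) * Real.exp (D * Real.log (T+D)) := ⟨_, rfl⟩
  have hBI : 0 < B_I := by
    rw [hBIdef]
    exact mul_pos (mul_pos hK₂ (by linarith)) (Real.exp_pos _)
  obtain ⟨c₆, hc6def⟩ : ∃ x : ℝ, x = c₃ + Real.log 2 + Real.log K₂ := ⟨_, rfl⟩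
  obtain ⟨C, hCdef⟩ : ∃ x : ℝ, x = Real.exp (2*c) * B_I + Real.exp c₆ := ⟨_, rfl⟩
  have hC : 0 < C := by
    rw [hCdef]
    exact add_pos (mul_pos (Real.exp_pos _) hBI) (Real.exp_pos _)
  refine ⟨c, C, hc, hC, ?_⟩
  intro d hd w hw hweq
  have hd2 : (2:ℝ) ≤ (d:ℝ) := by exact_mod_cast hd
  have hd0 : (0:ℝ) < (d:ℝ) := by linarith
  rw [← hqdef] at hweq
  obtain ⟨A, hAdef⟩ : ∃ x : ℝ, x = (4:ℝ) ^ (p / ((d:ℝ)+1)) := ⟨_, rfl⟩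
  have hA1 : (1:ℝ) ≤ A := by
    rw [hAdef, show (1:ℝ) = (4:ℝ)^(0:ℝ) from (Real.rpow_zero 4).symm]
    exact Real.rpow_le_rpow_of_exponent_le (by norm_num) (by positivity)
  have hA0 : (0:ℝ) < A := lt_of_lt_of_le one_pos hA1
  have hAA₀ : A ≤ A₀ := by
    rw [hAdef, hA0def]
    apply Real.rpow_le_rpow_of_exponent_le (by norm_num)
    apply div_le_div_of_nonneg_left hp.le (by norm_num)
    linarith
  rw [← hAdef]
  obtain ⟨t, htdef⟩ :
      ∃ x : ℝ, x = 2 * ((d:ℝ)+1) * A / (Real.exp 1 * p * w) * Real.exp (1/w) := ⟨_, rfl⟩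
  rw [← htdef]
  have hepw : 0 < Real.exp 1 * p * w := mul_pos (mul_pos hep hp) hw
  have ht0 : 0 < t := by
    rw [htdef]
    have h2d : 0 < 2 * ((d:ℝ)+1) * A := mul_pos (mul_pos (by norm_num) (by linarith)) hA0
    exact mul_pos (div_pos h2d hepw) (Real.exp_pos _)
  have hM : w * Real.exp w * q = (d:ℝ)+1 := by
    rw [eq_div_iff hq.ne'] at hweq
    exact hweq
  have hMeq : w * Real.exp w = ((d:ℝ)+1)/q := by
    rw [eq_div_iff hq.ne']; exact hM
  have hw_lb : w₀ ≤ w := by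
    rcases le_or_gt 1 w with h | h
    · exact le_trans hw₀1 h
    · have he : Real.exp w ≤ Real.exp 1 := Real.exp_le_exp.mpr h.le
      have h3 : (3:ℝ) ≤ (d:ℝ)+1 := by linarith
      have h6 : w * Real.exp w ≤ w * Real.exp 1 := mul_le_mul_of_nonneg_left he hw.le
      have h7 : w * Real.exp w * q ≤ w * Real.exp 1 * q := mul_le_mul_of_nonneg_right h6 hq.le
      have h8 : 3 ≤ w * (Real.exp 1 * q) := by linarith [hM, h7, h3]
      have hkey : 3 / (Real.exp 1 * q) ≤ w := (div_le_iff₀ (mul_pos hep hq)).mpr h8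
      rw [hw0def]
      exact le_trans (min_le_right _ _) hkey
  have htsplit : t = (2 * ((d:ℝ)+1) / (Real.exp 1 * p * w)) * (A * Real.exp (1/w)) := by
    rw [htdef]; ring
  have hbasepos : 0 < 2 * ((d:ℝ)+1) / (Real.exp 1 * p * w) :=
    div_pos (by linarith) hepw
  have ht_ub : t ≤ K₁ * ((d:ℝ)+1) / w := by
    have he : Real.exp (1/w) ≤ E := by
      rw [hEdef]
      apply Real.exp_le_exp.mpr
      apply div_le_div_of_nonneg_left (by norm_num) hw₀ hw_lb
    have h1 : A * Real.exp (1/w) ≤ A₀ * E :=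
      mul_le_mul hAA₀ he (Real.exp_pos _).le hA₀0.le
    calc t = (2 * ((d:ℝ)+1) / (Real.exp 1 * p * w)) * (A * Real.exp (1/w)) := htsplit
      _ ≤ (2 * ((d:ℝ)+1) / (Real.exp 1 * p * w)) * (A₀ * E) :=
          mul_le_mul_of_nonneg_left h1 hbasepos.le
      _ = K₁ * ((d:ℝ)+1) / w := by
          rw [hK1def]
          field_simp
  have ht_lb : 2 * ((d:ℝ)+1) / (Real.exp 1 * p * w) ≤ t := by
    have h1 : (1:ℝ) ≤ A * Real.exp (1/w) := by
      have h2 := Real.one_le_exp (le_of_lt (div_pos one_pos hw) : (0:ℝ) ≤ 1/w)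
      have h3 := mul_le_mul hA1 h2 zero_le_one (by linarith : (0:ℝ) ≤ A)
      linarith
    calc 2 * ((d:ℝ)+1) / (Real.exp 1 * p * w)
        = (2 * ((d:ℝ)+1) / (Real.exp 1 * p * w)) * 1 := by ring
      _ ≤ (2 * ((d:ℝ)+1) / (Real.exp 1 * p * w)) * (A * Real.exp (1/w)) :=
          mul_le_mul_of_nonneg_left h1 hbasepos.le
      _ = t := htsplit.symm
  have hlog2 : (0.6931471803:ℝ) < Real.log 2 := Real.log_two_gt_d9
  have hlogd2 : Real.log 2 ≤ Real.log d := Real.log_le_log (by norm_num) hd2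
  have hsqrt : (1:ℝ) ≤ Real.sqrt ((d:ℝ) * Real.log d) := by
    rw [show (1:ℝ) = Real.sqrt 1 from (Real.sqrt_one).symm]
    apply Real.sqrt_le_sqrt
    have h1 : (2:ℝ) * Real.log 2 ≤ (d:ℝ) * Real.log d :=
      mul_le_mul hd2 hlogd2 (by linarith) (by linarith)
    linarith
  have hXint : -2 ≤ (d:ℝ) * Real.log (Real.log d) / Real.log d := X_ge_neg_two hd2
  have hXarg : -(2*c) ≤ c * (d:ℝ) * Real.log (Real.log d) / Real.log d := by
    have heq : c * (d:ℝ) * Real.log (Real.log d) / Real.log d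
        = c * ((d:ℝ) * Real.log (Real.log d) / Real.log d) := by ring
    rw [heq]
    have h1 := mul_le_mul_of_nonneg_left hXint hc.le
    linarith
  have hexpX : Real.exp (-(2*c)) ≤ Real.exp (c * (d:ℝ) * Real.log (Real.log d) / Real.log d) :=
    Real.exp_le_exp.mpr hXarg
  have hgbnn : 0 ≤ gbinom t d := by
    unfold gbinom
    apply div_nonneg _ (by positivity)
    apply Finset.prod_nonneg
    intro i _
    have : (0:ℝ) ≤ (i:ℝ) := Nat.cast_nonneg i
    linarith
  rcases le_or_gt (d:ℝ) D with hcase | hcase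
  · -- Case I : d ≤ D
    have htT : t ≤ T := by
      calc t ≤ K₁ * ((d:ℝ)+1) / w := ht_ub
        _ ≤ K₁ * (D+1) / w₀ :=
            div_le_div₀ (mul_pos hK₁ (by linarith : (0:ℝ) < D+1)).le
              (mul_le_mul_of_nonneg_left (by linarith) hK₁.le) hw₀ hw_lb
        _ = T := by rw [hTdef]
    have hTD1 : (1:ℝ) ≤ T + D := by linarith
    have hgb : gbinom t d ≤ Real.exp (D * Real.log (T+D)) := by
      have hlogTD : 0 ≤ Real.log (T+D) := Real.log_nonneg hTD1
      have h1 : ∏ i ∈ Finset.range d, (t + (i:ℝ) + 1) ≤ (T+D)^d := by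
        calc ∏ i ∈ Finset.range d, (t + (i:ℝ) + 1)
            ≤ ∏ _i ∈ Finset.range d, (T+D) := by
              apply Finset.prod_le_prod
              · intro i _
                have : (0:ℝ) ≤ (i:ℝ) := Nat.cast_nonneg i
                linarith
              · intro i hi
                have hi' : (i:ℝ) + 1 ≤ (d:ℝ) := by
                  have : i + 1 ≤ d := Finset.mem_range.mp hi
                  exact_mod_cast this
                linarith
          _ = (T+D)^d := by rw [Finset.prod_const, Finset.card_range]
      have h2 : (T+D)^d ≤ Real.exp (D * Real.log (T+D)) := by
        have h3 : (T+D)^d = Real.exp ((d:ℝ) * Real.log (T+D)) := by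
          rw [Real.exp_nat_mul, Real.exp_log (by linarith)]
        rw [h3]
        apply Real.exp_le_exp.mpr
        exact mul_le_mul_of_nonneg_right hcase hlogTD
      have hfd : (1:ℝ) ≤ (Nat.factorial d : ℝ) := by
        exact_mod_cast Nat.one_le_iff_ne_zero.mpr d.factorial_pos.ne'
      calc gbinom t d ≤ ∏ i ∈ Finset.range d, (t + (i:ℝ) + 1) := by
            unfold gbinom
            apply div_le_self _ hfd
            apply Finset.prod_nonneg
            intro i _
            have : (0:ℝ) ≤ (i:ℝ) := Nat.cast_nonneg i
            linarith
        _ ≤ (T+D)^d := h1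
        _ ≤ Real.exp (D * Real.log (T+D)) := h2
    have hLHS : gbinom t d * (((d:ℝ)+1)/(Real.exp 1 * p)) * A ≤ B_I := by
      have hdiv : ((d:ℝ)+1)/(Real.exp 1 * p) ≤ (D+1)/(Real.exp 1 * p) :=
        div_le_div₀ (by linarith : (0:ℝ) ≤ D+1) (by linarith) (mul_pos hep hp) (le_refl _)
      have hinner : gbinom t d * (((d:ℝ)+1)/(Real.exp 1 * p))
          ≤ Real.exp (D * Real.log (T+D)) * ((D+1)/(Real.exp 1 * p)) :=
        mul_le_mul hgb hdiv (by positivity) (Real.exp_pos _).le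
      have houter : gbinom t d * (((d:ℝ)+1)/(Real.exp 1 * p)) * A
          ≤ Real.exp (D * Real.log (T+D)) * ((D+1)/(Real.exp 1 * p)) * A₀ := by
        apply mul_le_mul hinner hAA₀ hA0.le
        have h9 : (0:ℝ) < (D+1)/(Real.exp 1 * p) := div_pos (by linarith) (mul_pos hep hp)
        exact (mul_pos (Real.exp_pos _) h9).le
      calc gbinom t d * (((d:ℝ)+1)/(Real.exp 1 * p)) * A
          ≤ Real.exp (D * Real.log (T+D)) * ((D+1)/(Real.exp 1 * p)) * A₀ := houter
        _ = B_I := by rw [hBIdef, hK2def]; ring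
    have hfin : B_I ≤ C * Real.sqrt ((d:ℝ) * Real.log d) *
        Real.exp (c * (d:ℝ) * Real.log (Real.log d) / Real.log d) := by
      have h1 : B_I = (Real.exp (2*c) * B_I) * Real.exp (-(2*c)) := by
        rw [mul_comm (Real.exp (2*c)) B_I, mul_assoc, ← Real.exp_add]
        simp
      have h2 : Real.exp (2*c) * B_I ≤ C := by
        rw [hCdef]
        linarith [Real.exp_pos c₆]
      calc B_I = (Real.exp (2*c) * B_I) * Real.exp (-(2*c)) := h1
        _ ≤ C * Real.exp (-(2*c)) :=
            mul_le_mul_of_nonneg_right h2 (Real.exp_pos _).le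
        _ ≤ C * Real.exp (c * (d:ℝ) * Real.log (Real.log d) / Real.log d) :=
            mul_le_mul_of_nonneg_left hexpX hC.le
        _ ≤ C * Real.sqrt ((d:ℝ) * Real.log d) *
            Real.exp (c * (d:ℝ) * Real.log (Real.log d) / Real.log d) := by
            have h4 := mul_le_mul_of_nonneg_left hsqrt hC.le
            have h5 := mul_le_mul_of_nonneg_right (by linarith : C ≤ C * Real.sqrt ((d:ℝ) * Real.log d))
              (Real.exp_pos (c * (d:ℝ) * Real.log (Real.log d) / Real.log d)).le
            linarith
    linarith
  · -- Case II : d > D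
    have hd3 : (3:ℝ) ≤ (d:ℝ) := by linarith
    have hL1 : (1:ℝ) ≤ Real.log d := by
      have h3 : Real.exp 1 < 3 := lt_trans Real.exp_one_lt_d9 (by norm_num)
      have h4 : Real.exp 1 ≤ (d:ℝ) := by linarith
      calc (1:ℝ) = Real.log (Real.exp 1) := (Real.log_exp 1).symm
        _ ≤ Real.log d := Real.log_le_log (Real.exp_pos 1) h4
    have hL0 : (0:ℝ) < Real.log d := by linarith
    have hw1 : (1:ℝ) ≤ w := by
      by_contra hcon
      push_neg at hcon
      have he : Real.exp w < Real.exp 1 := Real.exp_lt_exp.mpr hcon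
      have h1 : (d:ℝ)+1 ≤ Real.exp 1 * q := by
        have ha : w * Real.exp w ≤ 1 * Real.exp 1 :=
          mul_le_mul hcon.le he.le (Real.exp_pos w).le zero_le_one
        have hb : w * Real.exp w * q ≤ 1 * Real.exp 1 * q :=
          mul_le_mul_of_nonneg_right ha hq.le
        have := hM
        linarith
      have h2 : Real.exp 1 * q ≤ D := by
        rw [hDdef]
        exact le_trans (le_max_right 3 (Real.exp 1 * q)) (le_max_right _ _)
      linarith
    have hwub : w ≤ c₂ * Real.log d := by
      have hexpw : Real.exp w ≤ ((d:ℝ)+1)/q := by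
        have h1 : Real.exp w ≤ w * Real.exp w := by
          have := mul_le_mul_of_nonneg_right hw1 (Real.exp_pos w).le
          linarith
        rw [hMeq] at h1
        exact h1
      have h1 : w ≤ Real.log (((d:ℝ)+1)/q) := by
        have := Real.log_le_log (Real.exp_pos w) hexpw
        rwa [Real.log_exp] at this
      have h2 : Real.log (((d:ℝ)+1)/q) = Real.log ((d:ℝ)+1) - Real.log q :=
        Real.log_div (by positivity) hq.ne'
      have h3 : Real.log ((d:ℝ)+1) ≤ Real.log 2 + Real.log d := by
        have hdd : (d:ℝ)+1 ≤ 2*d := by linarith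
        calc Real.log ((d:ℝ)+1) ≤ Real.log (2*d) := Real.log_le_log (by positivity) hdd
          _ = Real.log 2 + Real.log d := Real.log_mul (by norm_num) hd0.ne'
      have h4 : - Real.log q ≤ max 0 (- Real.log q) := le_max_right _ _
      have h5 : w ≤ Real.log d + c₁ := by rw [hc1def]; linarith
      rw [hc2def]
      have h6 := mul_le_mul_of_nonneg_left hL1 hc₁
      have h7 : (1 + c₁) * Real.log d = Real.log d + c₁ * Real.log d := by ring
      linarith
    have hwlb2 : Real.log d / mx ≤ w := by
      have hhalf : Real.log (((d:ℝ)+1)/q) / 2 ≤ w := half_log_le hw hMeq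
      have h2 : Real.log (((d:ℝ)+1)/q) = Real.log ((d:ℝ)+1) - Real.log q :=
        Real.log_div (by positivity) hq.ne'
      have h3 : Real.log d ≤ Real.log ((d:ℝ)+1) := Real.log_le_log hd0 (by linarith)
      rcases le_or_gt (2 * Real.log q) (Real.log d) with h | h
      · have h5 : Real.log d / 4 ≤ w := by
          rw [h2] at hhalf
          linarith
        have h6 : Real.log d / mx ≤ Real.log d / 4 :=
          div_le_div_of_nonneg_left (by linarith) (by norm_num) hmx
        linarith
      · have h7 : Real.log d ≤ mx := by
          rw [hmxdef]
          exact le_trans h.le (le_max_right _ _)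
        have h8 : Real.log d / mx ≤ 1 := by
          rw [div_le_one hmx0]; exact h7
        linarith
    have hLmx : 0 < Real.log d / mx := div_pos hL0 hmx0
    have ht2ub : t ≤ K₃ * (d:ℝ) / Real.log d := by
      have h1 : K₁*((d:ℝ)+1)/w ≤ K₁*(2*(d:ℝ))/(Real.log d/mx) :=
        div_le_div₀ (mul_pos hK₁ (by linarith : (0:ℝ) < 2*(d:ℝ))).le
          (mul_le_mul_of_nonneg_left (by linarith) hK₁.le) hLmx hwlb2
      have h2 : K₁*(2*(d:ℝ))/(Real.log d/mx) = K₃ * (d:ℝ) / Real.log d := by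
        rw [hK3def]
        field_simp
      linarith [ht_ub]
    have ht2lb : K₄ * (d:ℝ) / Real.log d ≤ t := by
      have h1 : 2*(d:ℝ) / (Real.exp 1 * p * (c₂ * Real.log d)) ≤ 2*((d:ℝ)+1)/(Real.exp 1 * p * w) := by
        apply div_le_div₀ (by linarith) (by linarith) hepw
        exact mul_le_mul_of_nonneg_left hwub (mul_pos hep hp).le
      have h2 : 2*(d:ℝ) / (Real.exp 1 * p * (c₂ * Real.log d)) = K₄ * (d:ℝ) / Real.log d := by
        rw [hK4def]
        field_simp
      linarith [ht_lb]
    have hlogbd : Real.log (1 + (d:ℝ)/t) ≤ c₃ + Real.log (Real.log d) := by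
      have hdt : (d:ℝ)/t ≤ Real.log d / K₄ := by
        have hden : 0 < K₄ * (d:ℝ) / Real.log d := div_pos (mul_pos hK₄ hd0) hL0
        have h1 : (d:ℝ)/t ≤ (d:ℝ)/(K₄ * (d:ℝ) / Real.log d) :=
          div_le_div_of_nonneg_left hd0.le hden ht2lb
        have h2 : (d:ℝ)/(K₄ * (d:ℝ) / Real.log d) = Real.log d / K₄ := by
          field_simp
        linarith
      have h3 : 1 + (d:ℝ)/t ≤ (1 + 1/K₄) * Real.log d := by
        have h5 : (1 + 1/K₄) * Real.log d = Real.log d + (1/K₄) * Real.log d := by ring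
        have h6 : Real.log d / K₄ = (1/K₄) * Real.log d := by ring
        linarith [hdt, hL1]
      have h4 : 0 < 1 + (d:ℝ)/t := by
        have : 0 < (d:ℝ)/t := div_pos hd0 ht0
        linarith
      calc Real.log (1 + (d:ℝ)/t) ≤ Real.log ((1+1/K₄) * Real.log d) :=
            Real.log_le_log h4 h3
        _ = c₃ + Real.log (Real.log d) := by
            rw [hc3def, Real.log_mul (by linarith [one_div_pos.mpr hK₄] : (1:ℝ) + 1/K₄ ≠ 0) hL0.ne']
    have hL2 : K₅ + 3 ≤ Real.log (Real.log d) := by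
      by_contra hcon
      push_neg at hcon
      have h1 : Real.log d < Real.exp (K₅+3) := by
        calc Real.log d = Real.exp (Real.log (Real.log d)) := (Real.exp_log hL0).symm
          _ < Real.exp (K₅+3) := Real.exp_lt_exp.mpr hcon
      have h2 : (d:ℝ) < Real.exp (Real.exp (K₅+3)) := by
        calc (d:ℝ) = Real.exp (Real.log d) := (Real.exp_log hd0).symm
          _ < _ := Real.exp_lt_exp.mpr h1
      have h3 : Real.exp (Real.exp (K₅+3)) ≤ D := by
        rw [hDdef]; exact le_max_left _ _
      linarith
    have hL2nn : 0 ≤ Real.log (Real.log d) := by linarith [hK₅]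
    have hgfull := gbinom_le ht0 d
    have hexp1 : (t+1)*(1+Real.log (1+(d:ℝ)/t))
        ≤ (K₃*(d:ℝ)/Real.log d + 1)*(1+c₃+Real.log (Real.log d)) := by
      have hnn : 0 ≤ 1 + Real.log (1+(d:ℝ)/t) := by
        have : 0 ≤ Real.log (1+(d:ℝ)/t) := by
          apply Real.log_nonneg
          have : (0:ℝ) ≤ (d:ℝ)/t := (div_pos hd0 ht0).le
          linarith
        linarith
      have hKdL : (0:ℝ) ≤ K₃*(d:ℝ)/Real.log d := (div_pos (mul_pos hK₃ hd0) hL0).le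
      apply mul_le_mul (by linarith [ht2ub]) (by linarith [hlogbd]) hnn (by linarith)
    have hu : (0:ℝ) ≤ (d:ℝ)/Real.log d := (div_pos hd0 hL0).le
    have huL : Real.log d ≤ (d:ℝ)/Real.log d := by
      rw [le_div_iff₀ hL0, ← pow_two]
      exact sq_log_le (by linarith)
    have hp1 : ((d:ℝ)/Real.log d) * (K₅+3) ≤ ((d:ℝ)/Real.log d) * Real.log (Real.log d) :=
      mul_le_mul_of_nonneg_left hL2 hu
    have hLL : Real.log (Real.log d) ≤ Real.log d := by
      have := Real.log_le_sub_one_of_pos hL0; linarith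
    have hexp2 : (K₃*(d:ℝ)/Real.log d + 1)*(1+c₃+Real.log (Real.log d))
        + (Real.log d + Real.log 2 + Real.log K₂)
        ≤ c₆ + c * (d:ℝ) * Real.log (Real.log d) / Real.log d := by
      have hexpand : (K₃*(d:ℝ)/Real.log d + 1)*(1+c₃+Real.log (Real.log d))
          = K₅ * ((d:ℝ)/Real.log d) + K₃ * (((d:ℝ)/Real.log d) * Real.log (Real.log d))
            + (1+c₃) + Real.log (Real.log d) := by
        rw [hK5def]
        field_simp
        ring
      have hrhs : c * (d:ℝ) * Real.log (Real.log d) / Real.log d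
          = K₃ * (((d:ℝ)/Real.log d) * Real.log (Real.log d))
            + ((d:ℝ)/Real.log d) * Real.log (Real.log d) := by
        rw [hcdef]
        field_simp
      rw [hexpand, hrhs, hc6def]
      have hxx : ((d:ℝ)/Real.log d) * (K₅+3)
          = K₅ * ((d:ℝ)/Real.log d) + 3 * ((d:ℝ)/Real.log d) := by ring
      linarith [hp1, huL, hLL, hL1, hu]
    have hfacbd : (((d:ℝ)+1)/(Real.exp 1 * p)) * A
        ≤ Real.exp (Real.log d + Real.log 2 + Real.log K₂) := by
      have he : Real.exp (Real.log d + Real.log 2 + Real.log K₂) = (d:ℝ) * 2 * K₂ := by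
        rw [Real.exp_add, Real.exp_add, Real.exp_log hd0,
          Real.exp_log (by norm_num : (0:ℝ)<2), Real.exp_log hK₂]
      rw [he]
      have e1 : (((d:ℝ)+1)/(Real.exp 1 * p)) * A₀ = ((d:ℝ)+1) * K₂ := by
        rw [hK2def]; ring
      calc (((d:ℝ)+1)/(Real.exp 1 * p)) * A ≤ (((d:ℝ)+1)/(Real.exp 1 * p)) * A₀ :=
            mul_le_mul_of_nonneg_left hAA₀ (by positivity)
        _ = ((d:ℝ)+1) * K₂ := e1
        _ ≤ (d:ℝ) * 2 * K₂ :=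
            mul_le_mul_of_nonneg_right (by linarith) hK₂.le
    have hLHS : gbinom t d * (((d:ℝ)+1)/(Real.exp 1 * p)) * A
        ≤ Real.exp ((t+1)*(1+Real.log (1+(d:ℝ)/t)))
          * Real.exp (Real.log d + Real.log 2 + Real.log K₂) := by
      have hre : gbinom t d * (((d:ℝ)+1)/(Real.exp 1 * p)) * A
          = gbinom t d * ((((d:ℝ)+1)/(Real.exp 1 * p)) * A) := by ring
      rw [hre]
      apply mul_le_mul hgfull hfacbd _ (Real.exp_pos _).le
      have h0 : 0 < ((d:ℝ)+1)/(Real.exp 1 * p) := div_pos (by linarith) (mul_pos hep hp)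
      exact (mul_pos h0 hA0).le
    have hfin : Real.exp ((t+1)*(1+Real.log (1+(d:ℝ)/t)))
          * Real.exp (Real.log d + Real.log 2 + Real.log K₂)
        ≤ C * Real.sqrt ((d:ℝ) * Real.log d) *
          Real.exp (c * (d:ℝ) * Real.log (Real.log d) / Real.log d) := by
      rw [← Real.exp_add]
      have h1 : (t+1)*(1+Real.log (1+(d:ℝ)/t)) + (Real.log d + Real.log 2 + Real.log K₂)
          ≤ c₆ + c * (d:ℝ) * Real.log (Real.log d) / Real.log d := by
        linarith [hexp1, hexp2]
      calc Real.exp ((t+1)*(1+Real.log (1+(d:ℝ)/t)) + (Real.log d + Real.log 2 + Real.log K₂))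
          ≤ Real.exp (c₆ + c * (d:ℝ) * Real.log (Real.log d) / Real.log d) :=
            Real.exp_le_exp.mpr h1
        _ = Real.exp c₆ * Real.exp (c * (d:ℝ) * Real.log (Real.log d) / Real.log d) :=
            Real.exp_add _ _
        _ ≤ C * Real.sqrt ((d:ℝ) * Real.log d) *
            Real.exp (c * (d:ℝ) * Real.log (Real.log d) / Real.log d) := by
            have h2 : Real.exp c₆ ≤ C := by
              rw [hCdef]
              linarith [mul_pos (Real.exp_pos (2*c)) hBI]
            have h3 : C ≤ C * Real.sqrt ((d:ℝ) * Real.log d) := by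
              have h4 := mul_le_mul_of_nonneg_left hsqrt hC.le
              linarith
            exact mul_le_mul_of_nonneg_right (by linarith)
              (Real.exp_pos _).le
    linarith
end

section
/- Let 0 < p₀ ≤ 1/e, let w₀ > 0 be the unique positive real with w₀·e^{w₀} = 2/p₀, and set C₀ := e·p₀·ln(1/p₀) + (2 + 1/e)·2^{1+p₀}·exp(1/w₀). Then for every integer d ≥ 1 and every 0 < p ≤ p₀ the following holds: letting w > 0 be the unique positive real with w·e^{w} = (d+1)/p and t₀ := (2(d+1)·4^{p/(d+1)}/(e·p·w))·exp(1/w), one has binom(t₀+d, d)·((d+1)/(e·p))·4^{p/(d+1)} ≤ (1/2)·C₀^d·sqrt(d)·(1/p)^{d+1}/(ln(1/p))^d. -/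
open Real Filter Topology

lemma aux_log_le_div_exp (u : ℝ) (hu : 0 < u) : Real.log u ≤ u / Real.exp 1 := by
  have h := Real.log_le_sub_one_of_pos (show (0:ℝ) < u / Real.exp 1 by positivity)
  rw [Real.log_div (ne_of_gt hu) (Real.exp_ne_zero 1), Real.log_exp] at h
  linarith

lemma aux_one_le_log (p : ℝ) (hp : 0 < p) (hpe : p ≤ 1 / Real.exp 1) :
    1 ≤ Real.log (1/p) := by
  rw [Real.le_log_iff_exp_le (by positivity), le_div_iff₀ hp]
  calc Real.exp 1 * p ≤ Real.exp 1 * (1/Real.exp 1) :=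
        mul_le_mul_of_nonneg_left hpe (Real.exp_pos 1).le
    _ = 1 := by field_simp

lemma aux_mul_log_mono (p p₀ : ℝ) (hp : 0 < p) (hpp : p ≤ p₀) (hp₀ : p₀ ≤ 1 / Real.exp 1) :
    p * Real.log (1/p) ≤ p₀ * Real.log (1/p₀) := by
  have hp₀pos : 0 < p₀ := lt_of_lt_of_le hp hpp
  have h1 : Real.log (1/p) = Real.log (1/p₀) + Real.log (p₀/p) := by
    rw [← Real.log_mul (by positivity) (by positivity)]
    congr 1; field_simp
  have h2 : Real.log (p₀/p) ≤ p₀/p - 1 := Real.log_le_sub_one_of_pos (by positivity)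
  have h3 : 1 ≤ Real.log (1/p₀) := aux_one_le_log p₀ hp₀pos hp₀
  have h4 : p * (p₀/p) = p₀ := by field_simp
  nlinarith [mul_le_mul_of_nonneg_left h2 hp.le,
    mul_le_mul_of_nonneg_left h3 (sub_nonneg.mpr hpp)]

lemma aux_factorial_lower (d : ℕ) (hd : 1 ≤ d) :
    Real.sqrt π * (Real.sqrt (2*(d:ℝ)) * ((d:ℝ)/Real.exp 1)^d) ≤ (Nat.factorial d : ℝ) := by
  have hs : Real.sqrt π ≤ Stirling.stirlingSeq d := by
    obtain ⟨n, rfl⟩ := Nat.exists_eq_succ_of_ne_zero (Nat.one_le_iff_ne_zero.mp hd)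
    have ht : Tendsto (Stirling.stirlingSeq ∘ Nat.succ) atTop (𝓝 (Real.sqrt π)) :=
      Stirling.tendsto_stirlingSeq_sqrt_pi.comp (tendsto_add_atTop_nat 1)
    exact Stirling.stirlingSeq'_antitone.le_of_tendsto ht n
  have hdpos : (0:ℝ) < (d:ℝ) := by exact_mod_cast hd
  have hden : (0:ℝ) < Real.sqrt (2*(d:ℝ)) * ((d:ℝ)/Real.exp 1)^d := by positivity
  rw [Stirling.stirlingSeq, le_div_iff₀ hden] at hs
  linarith [hs]

lemma aux_key2 (s e D : ℝ) (hs : 1.77 ≤ s) (he : 2.71 ≤ e) (hD : 1 ≤ D) :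
    2*(D+1) ≤ s*e*D := by
  have h1 : (4.7967:ℝ) ≤ s*e := by nlinarith
  have h2 := mul_le_mul_of_nonneg_right h1 (sub_nonneg.mpr hD)
  nlinarith [h1, h2, hD]

lemma aux_sqrt_pi : (1.77:ℝ) ≤ Real.sqrt π := by
  have h : (1.77:ℝ)^2 ≤ π := by nlinarith [Real.pi_gt_d6]
  nlinarith [Real.sq_sqrt Real.pi_pos.le, Real.sqrt_nonneg π, h]

set_option maxHeartbeats 4000000 in
theorem poly_const_growth_in_p (p₀ : ℝ) (hp₀ : 0 < p₀) (hp₀e : p₀ ≤ 1 / Real.exp 1)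
    (w₀ : ℝ) (hw₀pos : 0 < w₀) (hw₀ : w₀ * Real.exp w₀ = 2 / p₀)
    (C₀ : ℝ)
    (hC₀ : C₀ = Real.exp 1 * p₀ * Real.log (1 / p₀) +
      (2 + 1 / Real.exp 1) * (2 : ℝ) ^ (1 + p₀) * Real.exp (1 / w₀)) :
    ∀ d : ℕ, 1 ≤ d → ∀ p : ℝ, 0 < p → p ≤ p₀ →
      ∀ w : ℝ, 0 < w → w * Real.exp w = ((d : ℝ) + 1) / p →
        gbinom (2 * ((d : ℝ) + 1) * (4 : ℝ) ^ (p / ((d : ℝ) + 1)) /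
            (Real.exp 1 * p * w) * Real.exp (1 / w)) d *
          (((d : ℝ) + 1) / (Real.exp 1 * p)) * (4 : ℝ) ^ (p / ((d : ℝ) + 1)) ≤
        1 / 2 * C₀ ^ d * Real.sqrt d * ((1 / p) ^ (d + 1) / (Real.log (1 / p)) ^ d) := by
  intro d hd p hp hpp w hwpos hwe
  set D : ℝ := (d : ℝ) with hDdef
  have hD1 : (1:ℝ) ≤ D := by rw [hDdef]; exact_mod_cast hd
  have hDpos : (0:ℝ) < D := by linarith
  have hEpos : (0:ℝ) < Real.exp 1 := Real.exp_pos 1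
  have hE27 : (2.71:ℝ) ≤ Real.exp 1 := by
    have := Real.exp_one_gt_d9; linarith
  have hpe : p ≤ 1 / Real.exp 1 := hpp.trans hp₀e
  have hphalf : p ≤ 1/2 := by
    calc p ≤ 1 / Real.exp 1 := hpe
      _ ≤ 1/2 := by
        rw [div_le_div_iff₀ hEpos two_pos]; linarith
  set L : ℝ := Real.log (1/p) with hLdef
  have hL1 : 1 ≤ L := aux_one_le_log p hp hpe
  have hLpos : 0 < L := by linarith
  set a : ℝ := p / (D + 1) with hadef
  have ha0 : 0 ≤ a := by positivity
  have ha14 : a ≤ 1/4 := by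
    rw [hadef, div_le_iff₀ (by linarith)]
    linarith
  have hap₀ : 2 * a ≤ p₀ := by
    rw [hadef, mul_div_assoc', div_le_iff₀ (by linarith : (0:ℝ) < D + 1)]
    linarith [mul_nonneg hp₀.le (sub_nonneg.mpr hD1)]
  set A : ℝ := (4:ℝ) ^ a with hAdef
  have h4eq : (4:ℝ) = (2:ℝ) ^ (2:ℝ) := by
    rw [show (2:ℝ) = ((2:ℕ):ℝ) by norm_num, Real.rpow_natCast]; norm_num
  have hA2a : A = (2:ℝ) ^ (2*a) := by
    rw [hAdef, h4eq, ← Real.rpow_mul (by norm_num)]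
  have hApos : 0 < A := by rw [hAdef]; positivity
  have hAsqrt2 : A ≤ Real.sqrt 2 := by
    rw [hA2a, show Real.sqrt 2 = (2:ℝ) ^ ((1:ℝ)/2) from Real.sqrt_eq_rpow 2]
    exact Real.rpow_le_rpow_of_exponent_le (by norm_num) (by linarith)
  have hA2p₀ : A ≤ (2:ℝ) ^ p₀ := by
    rw [hA2a]
    exact Real.rpow_le_rpow_of_exponent_le (by norm_num) hap₀
  set t : ℝ := 2 * (D + 1) * A / (Real.exp 1 * p * w) * Real.exp (1 / w) with htdef
  have htpos : 0 < t := by rw [htdef]; positivity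
  -- w ≥ w₀
  have hww₀ : w₀ ≤ w := by
    by_contra hcon
    push_neg at hcon
    have h1 : w * Real.exp w < w₀ * Real.exp w₀ :=
      mul_lt_mul hcon (Real.exp_lt_exp.mpr hcon).le (Real.exp_pos w)
        (le_of_lt (hwpos.trans hcon))
    rw [hwe, hw₀] at h1
    have h2 : 2 / p₀ ≤ (D + 1) / p :=
      div_le_div₀ (by linarith) (by linarith) hp hpp
    linarith
  have hew : Real.exp (1/w) ≤ Real.exp (1/w₀) :=
    Real.exp_le_exp.mpr (one_div_le_one_div_of_le hw₀pos hww₀)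
  -- bound on L in terms of w
  have hLw : L ≤ w + w / ((D+1) * Real.exp 1) := by
    have h1p : (1:ℝ)/p = w/(D+1) * Real.exp w := by
      rw [div_mul_eq_mul_div, hwe]
      field_simp
    have hLform : L = Real.log (w/(D+1)) + w := by
      rw [hLdef, h1p, Real.log_mul (by positivity) (Real.exp_ne_zero w), Real.log_exp]
    have hlogu : Real.log (w/(D+1)) ≤ w/(D+1) / Real.exp 1 :=
      aux_log_le_div_exp _ (by positivity)
    rw [div_div] at hlogu
    linarith [hLform ▸ le_refl L]
  -- C₀ positivity
  have h2p₀pos : (0:ℝ) < (2:ℝ) ^ (1 + p₀) := Real.rpow_pos_of_pos two_pos _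
  have hlogp₀ : 1 ≤ Real.log (1/p₀) := aux_one_le_log p₀ hp₀ hp₀e
  have hC₀pos : 0 < C₀ := by
    rw [hC₀]
    have h5 : (0:ℝ) < (2 + 1 / Real.exp 1) * (2:ℝ) ^ (1+p₀) * Real.exp (1/w₀) := by positivity
    have h6 : (0:ℝ) < Real.exp 1 * p₀ := by positivity
    have h7 := mul_le_mul_of_nonneg_left hlogp₀ h6.le
    linarith [h5, h6, h7]
  -- key bound pieces
  have hDL : (D + 1) * L ≤ (2 + 1 / Real.exp 1) * (D * w) := by
    have h1 : (D+1) * L ≤ (D+1) * (w + w / ((D+1) * Real.exp 1)) :=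
      mul_le_mul_of_nonneg_left hLw (by linarith)
    have h2 : (D+1) * (w + w / ((D+1) * Real.exp 1)) = (D+1)*w + w / Real.exp 1 := by
      field_simp
      try ring
    have h3 : (D+1)*w + w / Real.exp 1 ≤ 2*D*w + D*w/Real.exp 1 := by
      have h3a : w / Real.exp 1 ≤ D * w / Real.exp 1 := by
        gcongr
        linarith [mul_nonneg (sub_nonneg.mpr hD1) hwpos.le]
      linarith [mul_nonneg (sub_nonneg.mpr hD1) hwpos.le, h3a]
    have h4 : (2 + 1/Real.exp 1) * (D * w) = 2*D*w + D*w/Real.exp 1 := by ring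
    rw [h4]
    rw [h2] at h1
    linarith
  have h2A : 2*A ≤ (2:ℝ)^(1+p₀) := by
    rw [Real.rpow_add two_pos, Real.rpow_one]
    linarith [hA2p₀]
  have hterm1 : t * Real.exp 1 * p * L ≤
      (2 + 1/Real.exp 1) * (2:ℝ) ^ (1+p₀) * Real.exp (1/w₀) * D := by
    have e1 : t * Real.exp 1 * p * L = (2*A*Real.exp (1/w)) * ((D+1)*L) / w := by
      rw [htdef]; field_simp
    rw [e1]
    calc (2*A*Real.exp (1/w)) * ((D+1)*L) / w
        ≤ (2*A*Real.exp (1/w)) * ((2 + 1/Real.exp 1)*(D*w)) / w := by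
          gcongr
          try exact hDL
      _ = (2 + 1/Real.exp 1) * ((2*A) * Real.exp (1/w) * D) := by
          field_simp
          try ring
      _ ≤ (2 + 1/Real.exp 1) * ((2:ℝ)^(1+p₀) * Real.exp (1/w₀) * D) := by
          gcongr
      _ = (2 + 1/Real.exp 1) * (2:ℝ)^(1+p₀) * Real.exp (1/w₀) * D := by ring
  have hterm2 : D * (Real.exp 1 * (p * L)) ≤ D * (Real.exp 1 * (p₀ * Real.log (1/p₀))) := by
    have h8 := mul_le_mul_of_nonneg_left (aux_mul_log_mono p p₀ hp hpp hp₀e) hEpos.le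
    exact mul_le_mul_of_nonneg_left h8 hDpos.le
  have hkey : (t + D) * Real.exp 1 * (p * L) ≤ C₀ * D := by
    have expand : (t + D) * Real.exp 1 * (p * L)
        = t*Real.exp 1*p*L + D*(Real.exp 1*(p*L)) := by ring
    rw [expand, hC₀]
    linarith [hterm1, hterm2]
  have hfac : (t+D)*Real.exp 1/D ≤ C₀/(p*L) := by
    rw [div_le_div_iff₀ hDpos (by positivity)]
    linarith [hkey]
  -- main chain
  have hgb : gbinom t d ≤ ((t+D)*Real.exp 1/D)^d / (Real.sqrt π * Real.sqrt (2*D)) := by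
    rw [gbinom]
    have hprod : ∏ i ∈ Finset.range d, (t + (i:ℝ) + 1) ≤ (t+D)^d := by
      calc ∏ i ∈ Finset.range d, (t + (i:ℝ) + 1) ≤ ∏ _i ∈ Finset.range d, (t+D) := by
            apply Finset.prod_le_prod
            · intro i _; positivity
            · intro i hi
              have hi' : (i:ℝ) + 1 ≤ D := by
                rw [hDdef]
                exact_mod_cast Nat.succ_le_of_lt (Finset.mem_range.mp hi)
              linarith
        _ = (t+D)^d := by rw [Finset.prod_const, Finset.card_range]
    have hfact := aux_factorial_lower d hd
    rw [← hDdef] at hfact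
    have hfactpos : (0:ℝ) < Real.sqrt π * (Real.sqrt (2*D) * (D/Real.exp 1)^d) := by positivity
    have hfacnat : (0:ℝ) < (Nat.factorial d : ℝ) := by exact_mod_cast Nat.factorial_pos d
    calc (∏ i ∈ Finset.range d, (t + (i:ℝ)+1)) / (Nat.factorial d : ℝ)
        ≤ (t+D)^d / (Nat.factorial d : ℝ) := by gcongr
      _ ≤ (t+D)^d / (Real.sqrt π * (Real.sqrt (2*D) * (D/Real.exp 1)^d)) := by
          gcongr
          try positivity
      _ = ((t+D)*Real.exp 1/D)^d / (Real.sqrt π * Real.sqrt (2*D)) := by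
          rw [div_pow, div_pow, mul_pow]
          have hπne : Real.sqrt π ≠ 0 := by positivity
          have h2Dne : Real.sqrt (2*D) ≠ 0 := by positivity
          have hDne : D ≠ 0 := ne_of_gt hDpos
          have hEne : Real.exp 1 ≠ 0 := ne_of_gt hEpos
          field_simp
          try ring
  have hX : (D+1)*A/(Real.sqrt π * Real.sqrt (2*D) * Real.exp 1) ≤ Real.sqrt D / 2 := by
    rw [div_le_div_iff₀ (by positivity) two_pos]
    have h2D : Real.sqrt (2*D) = Real.sqrt 2 * Real.sqrt D := Real.sqrt_mul (by norm_num) D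
    have hDD : Real.sqrt D * Real.sqrt D = D := Real.mul_self_sqrt hDpos.le
    have h22 : Real.sqrt 2 * Real.sqrt 2 = 2 := Real.mul_self_sqrt (by norm_num)
    have hπ : (1.77:ℝ) ≤ Real.sqrt π := aux_sqrt_pi
    rw [h2D]
    have key2 : 2*(D+1) ≤ Real.sqrt π * Real.exp 1 * D :=
      aux_key2 _ _ _ hπ hE27 hD1
    have e2 : Real.sqrt D * (Real.sqrt π * (Real.sqrt 2 * Real.sqrt D) * Real.exp 1)
        = (Real.sqrt π * Real.exp 1 * (Real.sqrt D * Real.sqrt D)) * Real.sqrt 2 := by ring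
    rw [e2, hDD]
    have hA2' : (D+1)*A*2 ≤ (D+1)*Real.sqrt 2*2 :=
      mul_le_mul_of_nonneg_right
        (mul_le_mul_of_nonneg_left hAsqrt2 (by linarith)) (by norm_num)
    have hfin : (D+1)*Real.sqrt 2*2 ≤ (Real.sqrt π * Real.exp 1 * D) * Real.sqrt 2 := by
      have := mul_le_mul_of_nonneg_right key2 (Real.sqrt_nonneg 2)
      linarith [this]
    linarith
  have hbase : 0 ≤ (t+D)*Real.exp 1/D := by positivity
  calc gbinom t d * ((D+1)/(Real.exp 1*p)) * A
      ≤ ((t+D)*Real.exp 1/D)^d / (Real.sqrt π * Real.sqrt (2*D)) * ((D+1)/(Real.exp 1*p)) * A := by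
        gcongr
      _ ≤ (C₀/(p*L))^d / (Real.sqrt π * Real.sqrt (2*D)) * ((D+1)/(Real.exp 1*p)) * A := by
        gcongr
        try exact hfac
      _ = C₀^d * ((1/p)^(d+1)/L^d) * ((D+1) * A/(Real.sqrt π * Real.sqrt (2*D) * Real.exp 1)) := by
        rw [div_pow]
        have hπne : Real.sqrt π ≠ 0 := by positivity
        have h2Dne : Real.sqrt (2*D) ≠ 0 := by positivity
        have hLne : L ≠ 0 := ne_of_gt hLpos
        have hpne : p ≠ 0 := ne_of_gt hp
        have hEne : Real.exp 1 ≠ 0 := ne_of_gt hEpos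
        field_simp
        try ring
        rw [inv_pow, mul_right_comm (L ^ d * p) (p ^ d) p⁻¹,
          mul_inv_cancel_right₀ (pow_ne_zero d hpne), mul_inv_cancel_right₀ hpne]
      _ ≤ C₀^d * ((1/p)^(d+1)/L^d) * (Real.sqrt D / 2) := by
        have hYpos : 0 ≤ C₀^d * ((1/p)^(d+1)/L^d) :=
          mul_nonneg (pow_nonneg hC₀pos.le d)
            (div_nonneg (by positivity) (pow_nonneg hLpos.le d))
        exact mul_le_mul_of_nonneg_left hX hYpos
      _ = 1/2 * C₀^d * Real.sqrt D * ((1/p)^(d+1)/L^d) := by ring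
end

section
/- Fix an integer d ≥ 1 and σ > 0. For y > 0 let w(y) > 0 be the unique positive real with w(y)·e^{w(y)} = y/(e·σ²). Then binom(2y/w(y) + d, d)·(ln(y)/y)^d converges to 2^d/d! as y → ∞. -/
open Real Filter

theorem range_const_tendsto (d : ℕ) (hd : 1 ≤ d) (σ : ℝ) (hσ : 0 < σ)
    (w : ℝ → ℝ) (hw : ∀ y : ℝ, 0 < y → 0 < w y ∧
      w y * Real.exp (w y) = y / (Real.exp 1 * σ ^ 2)) :
    Tendsto (fun y : ℝ => gbinom (2 * y / w y) d * (Real.log y / y) ^ d) atTop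
      (nhds (2 ^ d / (Nat.factorial d : ℝ))) := by
  have hc : (0:ℝ) < Real.exp 1 * σ ^ 2 := by positivity
  have hlogx : Tendsto (fun x : ℝ => Real.log x / x) atTop (nhds 0) := by
    simpa using Real.isLittleO_log_id_atTop.tendsto_div_nhds_zero
  -- w tends to atTop
  have hwtop : Tendsto w atTop atTop := by
    apply tendsto_atTop_mono' atTop
      (show ∀ᶠ y in atTop, Real.log (y / (Real.exp 1 * σ ^ 2)) / 2 ≤ w y from ?_)
    · exact (tendsto_log_atTop.comp (tendsto_id.atTop_div_const hc)).atTop_div_const two_pos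
    · filter_upwards [eventually_gt_atTop 0] with y hy
      obtain ⟨hw1, hw2⟩ := hw y hy
      have h1 : y / (Real.exp 1 * σ ^ 2) ≤ Real.exp (2 * w y) := by
        rw [← hw2, two_mul, Real.exp_add]
        have := (Real.add_one_le_exp (w y))
        nlinarith [Real.exp_pos (w y)]
      have := Real.log_le_log (by positivity) h1
      rw [Real.log_exp] at this
      linarith
  -- log y / w y tends to 1
  have hkey : Tendsto (fun y : ℝ => Real.log y / w y) atTop (nhds 1) := by
    have heq : ∀ᶠ y in atTop, Real.log y / w y
        = 1 + Real.log (w y) / w y + Real.log (Real.exp 1 * σ ^ 2) / w y := by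
      filter_upwards [eventually_gt_atTop 0] with y hy
      obtain ⟨hw1, hw2⟩ := hw y hy
      have : Real.log y = w y + Real.log (w y) + Real.log (Real.exp 1 * σ ^ 2) := by
        have h := congrArg Real.log hw2
        rw [Real.log_mul (ne_of_gt hw1) (Real.exp_ne_zero _), Real.log_exp,
          Real.log_div (ne_of_gt hy) (ne_of_gt hc)] at h
        linarith
      rw [this]
      field_simp
    rw [tendsto_congr' heq]
    have h2 : Tendsto (fun y => Real.log (w y) / w y) atTop (nhds 0) :=
      hlogx.comp hwtop
    have h3 : Tendsto (fun y => Real.log (Real.exp 1 * σ ^ 2) / w y) atTop (nhds 0) :=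
      tendsto_const_nhds.div_atTop hwtop
    simpa using (tendsto_const_nhds.add h2).add h3
  -- rewrite the function
  have heq2 : ∀ y : ℝ, gbinom (2 * y / w y) d * (Real.log y / y) ^ d
      = (∏ i ∈ Finset.range d,
          ((2 * y / w y + (i : ℝ) + 1) * (Real.log y / y))) / (Nat.factorial d : ℝ) := by
    intro y
    rw [Finset.prod_mul_distrib, Finset.prod_const, Finset.card_range, gbinom]
    ring
  simp only [heq2]
  have h2d : (2:ℝ) ^ d / (Nat.factorial d : ℝ)
      = (∏ _i ∈ Finset.range d, (2:ℝ)) / (Nat.factorial d : ℝ) := by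
    rw [Finset.prod_const, Finset.card_range]
  rw [h2d]
  apply Tendsto.div_const
  apply tendsto_finset_prod
  intro i _
  have hfac : ∀ᶠ y in atTop, (2 * y / w y + (i : ℝ) + 1) * (Real.log y / y)
      = 2 * (Real.log y / w y) + ((i : ℝ) + 1) * (Real.log y / y) := by
    filter_upwards [eventually_gt_atTop 0] with y hy
    have hw1 := (hw y hy).1
    field_simp
    ring
  rw [tendsto_congr' hfac]
  have := ((hkey.const_mul 2).add ((hlogx.const_mul ((i:ℝ)+1)))).congr (fun y => rfl)
  simpa using this
end

section
/- Let C > 0 and let d ≥ 1 be an integer with d ≥ 2Ce². Set y₀ := (d/(2C))·ln(d/(2eC)) (so that ε₀ := 4·e^{−y₀} is the threshold of the paper). Then: (i) y₀ ≥ e², i.e. ε₀ ≤ 4·exp(−e²); (ii) the unique w₀ > 0 with w₀·e^{w₀} = y₀/e satisfies 2y₀/w₀ = d/C; (iii) binom(d/C + d, d)·(ln(y₀)/y₀)^d ≤ (2π)^{−1/2}·(4e)^d·(1+C)^d·d^{−(d+1/2)}; and (iv) if moreover 1/sqrt(360e) ≤ C ≤ 1/(2e²), then y₀ ≤ 90d²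 + 11d + 3, i.e. ε₀ ≥ exp(−90d² − 11d − 3). -/
open Real Filter

lemma aux_div (s x e a b : ℝ) (hs : s ≠ 0) (hx : x ≠ 0) (he : e ≠ 0) :
    s⁻¹ * (a * e) * b * x⁻¹ = a * b / (s * (x * e⁻¹)) := by
  field_simp

/-- Stirling lower bound: `√(2π) d^(d+1/2) e^(-d) ≤ d!`. -/
lemma fact_lower_bound (d : ℕ) (hd : 1 ≤ d) :
    Real.sqrt (2 * π) * ((d : ℝ) ^ ((d : ℝ) + 1 / 2) * Real.exp (-(d : ℝ))) ≤
      (Nat.factorial d : ℝ) := by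
  have hdpos : (0 : ℝ) < d := by exact_mod_cast hd
  have hpi : Real.sqrt π ≤ Stirling.stirlingSeq d := by
    obtain ⟨n, rfl⟩ := Nat.exists_eq_add_of_le hd
    have h := Stirling.stirlingSeq'_antitone.le_of_tendsto
      (Stirling.tendsto_stirlingSeq_sqrt_pi.comp (tendsto_add_atTop_nat 1)) n
    simpa [Nat.add_comm] using h
  have hden : 0 < Real.sqrt (2 * d) * ((d : ℝ) / Real.exp 1) ^ d := by positivity
  rw [Stirling.stirlingSeq, le_div_iff₀ hden] at hpi
  refine le_trans (le_of_eq ?_) hpi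
  have h1 : (d : ℝ) ^ ((d : ℝ) + 1 / 2) = (d : ℝ) ^ d * Real.sqrt d := by
    rw [Real.rpow_add hdpos, Real.rpow_natCast, Real.sqrt_eq_rpow]
  have h2 : Real.sqrt (2 * π) = Real.sqrt 2 * Real.sqrt π := Real.sqrt_mul (by norm_num) _
  have h3 : Real.sqrt (2 * d) = Real.sqrt 2 * Real.sqrt d := Real.sqrt_mul (by norm_num) _
  have h4 : ((d : ℝ) / Real.exp 1) ^ d = (d : ℝ) ^ d * Real.exp (-(d : ℝ)) := by
    rw [div_pow, Real.exp_neg, Real.exp_one_pow, div_eq_mul_inv]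
  rw [h1, h2, h3, h4]; ring

lemma log_le_aux (x c : ℝ) (hx : 0 < x) (hc : 0 < c) : Real.log x ≤ x / c + Real.log c - 1 := by
  have h := Real.log_le_sub_one_of_pos (show 0 < x / c by positivity)
  rw [Real.log_div (ne_of_gt hx) (ne_of_gt hc)] at h
  linarith

theorem range_const_bounds (C : ℝ) (hC : 0 < C) (d : ℕ) (hd : 1 ≤ d)
    (hdC : 2 * C * Real.exp 1 ^ 2 ≤ (d : ℝ))
    (y₀ : ℝ) (hy₀ : y₀ = (d : ℝ) / (2 * C) * Real.log ((d : ℝ) / (2 * Real.exp 1 * C))) :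
    Real.exp 1 ^ 2 ≤ y₀ ∧
    (∀ w₀ : ℝ, 0 < w₀ → w₀ * Real.exp w₀ = y₀ / Real.exp 1 → 2 * y₀ / w₀ = (d : ℝ) / C) ∧
    gbinom ((d : ℝ) / C) d * (Real.log y₀ / y₀) ^ d ≤
      (2 * Real.pi) ^ (-(1 : ℝ) / 2) * (4 * Real.exp 1) ^ d * (1 + C) ^ d *
        (d : ℝ) ^ (-((d : ℝ) + 1 / 2)) ∧
    (1 / Real.sqrt (360 * Real.exp 1) ≤ C → C ≤ 1 / (2 * Real.exp 1 ^ 2) →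
      y₀ ≤ 90 * (d : ℝ) ^ 2 + 11 * (d : ℝ) + 3) := by
  have he : (0 : ℝ) < Real.exp 1 := Real.exp_pos 1
  have he1 : (2 : ℝ) ≤ Real.exp 1 := by
    have := Real.add_one_le_exp (1 : ℝ); linarith
  have hdpos : (0 : ℝ) < d := by exact_mod_cast hd
  set a : ℝ := (d : ℝ) / (2 * C) with ha_def
  have ha_pos : 0 < a := by positivity
  have ha : Real.exp 1 ^ 2 ≤ a := by
    rw [ha_def, le_div_iff₀ (by positivity)]; nlinarith
  have hloga : 2 ≤ Real.log a := by
    calc (2 : ℝ) = Real.log (Real.exp 1 ^ 2) := by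
          rw [Real.log_pow, Real.log_exp]; norm_num
      _ ≤ Real.log a := Real.log_le_log (by positivity) ha
  have hy : y₀ = a * (Real.log a - 1) := by
    have harg : (d : ℝ) / (2 * Real.exp 1 * C) = a / Real.exp 1 := by
      rw [ha_def, div_div]; congr 1; ring
    rw [hy₀, harg, Real.log_div (ne_of_gt ha_pos) (ne_of_gt he), Real.log_exp]
  have hla1 : 1 ≤ Real.log a - 1 := by linarith
  have hya : a ≤ y₀ := by nlinarith
  have hy_pos : 0 < y₀ := lt_of_lt_of_le ha_pos hya
  have part1 : Real.exp 1 ^ 2 ≤ y₀ := le_trans ha hya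
  -- log a ≤ a / e² + 1
  have hlog_le : Real.log a ≤ a / Real.exp 1 ^ 2 + 1 := by
    have h := log_le_aux a (Real.exp 1 ^ 2) ha_pos (by positivity)
    have h2 : Real.log (Real.exp 1 ^ 2) = 2 := by
      rw [Real.log_pow, Real.log_exp]; norm_num
    rw [h2] at h; linarith
  have hy_le : y₀ ≤ a ^ 2 / Real.exp 1 ^ 2 := by
    rw [hy]
    have h1 : Real.log a - 1 ≤ a / Real.exp 1 ^ 2 := by linarith
    calc a * (Real.log a - 1) ≤ a * (a / Real.exp 1 ^ 2) :=
          mul_le_mul_of_nonneg_left h1 ha_pos.le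
      _ = a ^ 2 / Real.exp 1 ^ 2 := by ring
  refine ⟨part1, ?_, ?_, ?_⟩
  · -- part 2
    intro w₀ hw₀pos hw₀eq
    have hmono : StrictMonoOn (fun w : ℝ => w * Real.exp w) (Set.Ici 0) := by
      intro x hx y hy hxy
      have hex : Real.exp x < Real.exp y := Real.exp_lt_exp.mpr hxy
      simp only [Set.mem_Ici] at hx hy
      show x * Real.exp x < y * Real.exp y
      nlinarith [Real.exp_pos x, Real.exp_pos y,
        mul_pos (sub_pos.mpr hxy) (Real.exp_pos y),
        mul_nonneg hx (le_of_lt (sub_pos.mpr hex))]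
    have hkey : (Real.log a - 1) * Real.exp (Real.log a - 1) = y₀ / Real.exp 1 := by
      rw [Real.exp_sub, Real.exp_log ha_pos, hy]; field_simp
    have hweq : w₀ = Real.log a - 1 := by
      apply hmono.injOn (Set.mem_Ici.mpr hw₀pos.le) (Set.mem_Ici.mpr (by linarith))
      simp only [hw₀eq, hkey]
    rw [hweq, hy, ha_def]
    have hne : Real.log ((d : ℝ) / (2 * C)) - 1 ≠ 0 := by rw [← ha_def]; linarith
    field_simp
  · -- part 3
    have hlogy_le : Real.log y₀ ≤ 2 * (Real.log a - 1) := by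
      calc Real.log y₀ ≤ Real.log (a ^ 2 / Real.exp 1 ^ 2) := Real.log_le_log hy_pos hy_le
        _ = 2 * Real.log a - 2 := by
            rw [Real.log_div (by positivity) (by positivity), Real.log_pow, Real.log_pow,
              Real.log_exp]; push_cast; ring
        _ = 2 * (Real.log a - 1) := by ring
    have hlogy_nonneg : 0 ≤ Real.log y₀ :=
      Real.log_nonneg (by nlinarith)
    have hratio : Real.log y₀ / y₀ ≤ 4 * C / (d : ℝ) := by
      have hne : Real.log a - 1 ≠ 0 := by linarith
      have h1 : Real.log y₀ / y₀ ≤ 2 * (Real.log a - 1) / y₀ :=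
        div_le_div_of_nonneg_right hlogy_le hy_pos.le
      have h2 : 2 * (Real.log a - 1) / y₀ = 2 / a := by
        rw [hy]; field_simp
      have h3 : 2 / a = 4 * C / (d : ℝ) := by
        rw [ha_def]; field_simp; ring
      rw [← h3, ← h2]; exact h1
    have hratio_nonneg : 0 ≤ Real.log y₀ / y₀ := div_nonneg hlogy_nonneg hy_pos.le
    have hpow : (Real.log y₀ / y₀) ^ d ≤ (4 * C / (d : ℝ)) ^ d :=
      pow_le_pow_left₀ hratio_nonneg hratio d
    have hprod : ∏ i ∈ Finset.range d, ((d : ℝ) / C + (i : ℝ) + 1) ≤ ((d : ℝ) / C + d) ^ d := by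
      calc ∏ i ∈ Finset.range d, ((d : ℝ) / C + (i : ℝ) + 1)
          ≤ ∏ _i ∈ Finset.range d, ((d : ℝ) / C + d) := by
            apply Finset.prod_le_prod
            · intro i _; positivity
            · intro i hi
              have h := Finset.mem_range.mp hi
              have : (i : ℝ) + 1 ≤ (d : ℝ) := by exact_mod_cast Nat.succ_le_of_lt h
              linarith
        _ = ((d : ℝ) / C + d) ^ d := by rw [Finset.prod_const, Finset.card_range]
    have hfac_pos : (0 : ℝ) < (Nat.factorial d : ℝ) := by exact_mod_cast Nat.factorial_pos d
    have hpc : ((d : ℝ) / C + d) ^ d * (4 * C / (d : ℝ)) ^ d = (4 * (1 + C)) ^ d := by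
      rw [← mul_pow]; congr 1; field_simp
    have hstep : gbinom ((d : ℝ) / C) d * (Real.log y₀ / y₀) ^ d ≤
        (4 * (1 + C)) ^ d / (Nat.factorial d : ℝ) := by
      rw [gbinom, div_mul_eq_mul_div]
      apply div_le_div_of_nonneg_right _ hfac_pos.le
      calc (∏ i ∈ Finset.range d, ((d : ℝ) / C + (i : ℝ) + 1)) * (Real.log y₀ / y₀) ^ d
          ≤ ((d : ℝ) / C + d) ^ d * (4 * C / (d : ℝ)) ^ d :=
            mul_le_mul hprod hpow (pow_nonneg hratio_nonneg d) (by positivity)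
        _ = (4 * (1 + C)) ^ d := hpc
    have hden_pos : 0 < Real.sqrt (2 * π) * ((d : ℝ) ^ ((d : ℝ) + 1 / 2) * Real.exp (-(d : ℝ))) := by
      have : (0 : ℝ) < π := Real.pi_pos
      positivity
    have hrhs : (2 * Real.pi) ^ (-(1 : ℝ) / 2) * (4 * Real.exp 1) ^ d * (1 + C) ^ d *
        (d : ℝ) ^ (-((d : ℝ) + 1 / 2)) =
        (4 * (1 + C)) ^ d /
          (Real.sqrt (2 * π) * ((d : ℝ) ^ ((d : ℝ) + 1 / 2) * Real.exp (-(d : ℝ)))) := by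
      have hpi : (0 : ℝ) < 2 * π := by positivity
      rw [show (-(1 : ℝ) / 2) = -(1 / 2) by ring, Real.rpow_neg hpi.le, ← Real.sqrt_eq_rpow,
        Real.rpow_neg (Nat.cast_nonneg d), Real.exp_neg, ← Real.exp_one_pow, mul_pow,
        mul_pow 4 (1 + C)]
      exact aux_div _ _ _ _ _ (by positivity) (by positivity) (by positivity)
    rw [hrhs]
    refine hstep.trans ?_
    exact div_le_div_of_nonneg_left (by positivity) hden_pos (fact_lower_bound d hd)
  · -- part 4
    intro h360 _
    have hs : Real.sqrt (360 * Real.exp 1) ^ 2 = 360 * Real.exp 1 :=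
      Real.sq_sqrt (by positivity)
    have hs_pos : 0 < Real.sqrt (360 * Real.exp 1) := Real.sqrt_pos.mpr (by positivity)
    have h1 : 1 ≤ C * Real.sqrt (360 * Real.exp 1) := by
      rw [div_le_iff₀ hs_pos] at h360; linarith
    have h2 : 1 ≤ 360 * Real.exp 1 * C ^ 2 := by nlinarith
    have hda : 2 * C * a = (d : ℝ) := by rw [ha_def]; field_simp
    have hye2 : y₀ * Real.exp 1 ^ 2 ≤ a ^ 2 := by
      rw [le_div_iff₀ (show (0:ℝ) < Real.exp 1 ^ 2 by positivity)] at hy_le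
      exact hy_le
    have k0 : 1 ≤ 360 * C ^ 2 * Real.exp 1 ^ 2 := by
      calc (1 : ℝ) ≤ Real.exp 1 := by linarith
        _ = 1 * Real.exp 1 := (one_mul _).symm
        _ ≤ 360 * Real.exp 1 * C ^ 2 * Real.exp 1 := mul_le_mul_of_nonneg_right h2 he.le
        _ = 360 * C ^ 2 * Real.exp 1 ^ 2 := by ring
    have k1 : y₀ ≤ 360 * C ^ 2 * Real.exp 1 ^ 2 * y₀ := le_mul_of_one_le_left hy_pos.le k0
    have k2 : 360 * C ^ 2 * (y₀ * Real.exp 1 ^ 2) ≤ 360 * C ^ 2 * a ^ 2 :=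
      mul_le_mul_of_nonneg_left hye2 (by positivity)
    have hd2 : (d : ℝ) ^ 2 = 4 * C ^ 2 * a ^ 2 := by rw [← hda]; ring
    have k3 : 360 * C ^ 2 * a ^ 2 = 90 * (d : ℝ) ^ 2 := by rw [hd2]; ring
    linarith
end
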